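/- arXiv:2211.14967 — 6 statements merged into one kernel-verified Lean document; each statement's English description precedes it below -/
import Mathlib

section
/- If q ∈ k× is not a root of unity, then the quantum torus O_q((k×)^2) = k⟨x^{±1}, y^{±1} | xy = qyx⟩ is a simple ring: its only two-sided ideals are 0 and the whole ring. -/
open FreeAlgebra in
/-- Defining relations of the rank-two quantum torus `k⟨x^{±1}, y^{±1} | xy = qyx⟩`:
generator `0` is `x`, `1` is `x⁻¹`, `2` is `y`, `3` is `y⁻¹`. -/
inductive QTorusRel (k : Type*) [CommRing k] (q : k) :
    FreeAlgebra k (Fin 4) → FreeAlgebra k (Fin 4) → Prop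
  | xinv : QTorusRel k q (ι k (0 : Fin 4) * ι k (1 : Fin 4)) 1
  | invx : QTorusRel k q (ι k (1 : Fin 4) * ι k (0 : Fin 4)) 1
  | yinv : QTorusRel k q (ι k (2 : Fin 4) * ι k (3 : Fin 4)) 1
  | invy : QTorusRel k q (ι k (3 : Fin 4) * ι k (2 : Fin 4)) 1
  | qcomm : QTorusRel k q (ι k (0 : Fin 4) * ι k (2 : Fin 4))
      (algebraMap k _ q * (ι k (2 : Fin 4) * ι k (0 : Fin 4)))

/-- The rank-two quantum torus `O_q((k×)²)`. -/
abbrev QuantumTorus (k : Type*) [CommRing k] (q : k) := RingQuot (QTorusRel k q)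

namespace QTorusAux

variable {k : Type*} [Field k] (q : k)

open FreeAlgebra

noncomputable def X : QuantumTorus k q :=
  RingQuot.mkAlgHom k (QTorusRel k q) (ι k (0 : Fin 4))
noncomputable def Xi : QuantumTorus k q :=
  RingQuot.mkAlgHom k (QTorusRel k q) (ι k (1 : Fin 4))
noncomputable def Y : QuantumTorus k q :=
  RingQuot.mkAlgHom k (QTorusRel k q) (ι k (2 : Fin 4))
noncomputable def Yi : QuantumTorus k q :=
  RingQuot.mkAlgHom k (QTorusRel k q) (ι k (3 : Fin 4))

lemma X_Xi : X q * Xi q = 1 := by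
  rw [X, Xi, ← map_mul, RingQuot.mkAlgHom_rel k QTorusRel.xinv, map_one]

lemma Xi_X : Xi q * X q = 1 := by
  rw [X, Xi, ← map_mul, RingQuot.mkAlgHom_rel k QTorusRel.invx, map_one]

lemma Y_Yi : Y q * Yi q = 1 := by
  rw [Y, Yi, ← map_mul, RingQuot.mkAlgHom_rel k QTorusRel.yinv, map_one]

lemma Yi_Y : Yi q * Y q = 1 := by
  rw [Y, Yi, ← map_mul, RingQuot.mkAlgHom_rel k QTorusRel.invy, map_one]

/-- `x` as a unit. -/
noncomputable def uX : (QuantumTorus k q)ˣ := ⟨X q, Xi q, X_Xi q, Xi_X q⟩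
/-- `y` as a unit. -/
noncomputable def uY : (QuantumTorus k q)ˣ := ⟨Y q, Yi q, Y_Yi q, Yi_Y q⟩

lemma XY (hq0 : q ≠ 0) :
    (↑(uX q) : QuantumTorus k q) * ↑(uY q) =
      (↑(Units.mk0 q hq0) : k) • ((↑(uY q) : QuantumTorus k q) * ↑(uX q)) := by
  show X q * Y q = q • (Y q * X q)
  rw [X, Y, ← map_mul, RingQuot.mkAlgHom_rel k QTorusRel.qcomm, map_mul, map_mul,
    AlgHom.commutes, Algebra.smul_def]

section conj

variable {A : Type*} [Ring A] [Algebra k A]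

/-- If `u v = c • (v u)`, then `u⁻¹ v = c⁻¹ • (v u⁻¹)`. -/
lemma swap_inv (u v : Aˣ) (c : kˣ)
    (h : (↑u : A) * ↑v = (↑c : k) • ((↑v : A) * ↑u)) :
    (↑u⁻¹ : A) * ↑v = (↑c⁻¹ : k) • ((↑v : A) * ↑u⁻¹) := by
  have e1 : (↑u⁻¹ : A) * (↑u * ↑v) * ↑u⁻¹ = ↑v * ↑u⁻¹ := by
    rw [← mul_assoc (↑u⁻¹ : A) (↑u : A) (↑v : A), Units.inv_mul, one_mul]
  have e2 : (↑u⁻¹ : A) * ((↑c : k) • ((↑v : A) * ↑u)) * ↑u⁻¹ =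
      (↑c : k) • ((↑u⁻¹ : A) * ↑v) := by
    rw [mul_smul_comm, smul_mul_assoc]
    congr 1
    rw [mul_assoc, mul_assoc, Units.mul_inv, mul_one]
  have e3 : (↑v : A) * ↑u⁻¹ = (↑c : k) • ((↑u⁻¹ : A) * ↑v) := by
    rw [← e1, h, e2]
  calc (↑u⁻¹ : A) * ↑v
      = (↑c⁻¹ : k) • ((↑c : k) • ((↑u⁻¹ : A) * ↑v)) := by
        rw [smul_smul, ← Units.val_mul c⁻¹ c, inv_mul_cancel, Units.val_one, one_smul]
    _ = (↑c⁻¹ : k) • ((↑v : A) * ↑u⁻¹) := by rw [← e3]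

/-- If `u v = c • (v u)`, then `u v⁻¹ = c⁻¹ • (v⁻¹ u)`. -/
lemma swap_inv' (u v : Aˣ) (c : kˣ)
    (h : (↑u : A) * ↑v = (↑c : k) • ((↑v : A) * ↑u)) :
    (↑u : A) * ↑v⁻¹ = (↑c⁻¹ : k) • ((↑v⁻¹ : A) * ↑u) := by
  have e1 : (↑v⁻¹ : A) * (↑u * ↑v) * ↑v⁻¹ = ↑v⁻¹ * ↑u := by
    rw [mul_assoc, mul_assoc, Units.mul_inv, mul_one]
  have e2 : (↑v⁻¹ : A) * ((↑c : k) • ((↑v : A) * ↑u)) * ↑v⁻¹ =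
      (↑c : k) • ((↑u : A) * ↑v⁻¹) := by
    rw [mul_smul_comm, smul_mul_assoc]
    congr 1
    rw [← mul_assoc (↑v⁻¹ : A) (↑v : A) (↑u : A), Units.inv_mul, one_mul]
  have e3 : (↑v⁻¹ : A) * ↑u = (↑c : k) • ((↑u : A) * ↑v⁻¹) := by
    rw [← e1, h, e2]
  calc (↑u : A) * ↑v⁻¹
      = (↑c⁻¹ : k) • ((↑c : k) • ((↑u : A) * ↑v⁻¹)) := by
        rw [smul_smul, ← Units.val_mul c⁻¹ c, inv_mul_cancel, Units.val_one, one_smul]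
    _ = (↑c⁻¹ : k) • ((↑v⁻¹ : A) * ↑u) := by rw [← e3]

lemma conj_zpow (u v : Aˣ) (c : kˣ)
    (h : (↑u : A) * ↑v = (↑c : k) • ((↑v : A) * ↑u)) (j : ℤ) :
    (↑u : A) * ↑(v ^ j) = (↑(c ^ j) : k) • ((↑(v ^ j) : A) * ↑u) := by
  induction j using Int.induction_on with
  | zero => simp
  | succ i ih =>
    calc (↑u : A) * ↑(v ^ ((i : ℤ) + 1))
        = ↑u * (↑(v ^ (i : ℤ)) * ↑v) := by rw [zpow_add_one, Units.val_mul]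
      _ = (↑u * ↑(v ^ (i : ℤ))) * ↑v := (mul_assoc _ _ _).symm
      _ = ((↑(c ^ (i : ℤ)) : k) • ((↑(v ^ (i : ℤ)) : A) * ↑u)) * ↑v := by rw [ih]
      _ = (↑(c ^ (i : ℤ)) : k) • ((↑(v ^ (i : ℤ)) : A) * (↑u * ↑v)) := by
          rw [smul_mul_assoc, mul_assoc]
      _ = (↑(c ^ (i : ℤ)) : k) • ((↑(v ^ (i : ℤ)) : A) * ((↑c : k) • ((↑v : A) * ↑u))) := by
          rw [h]
      _ = ((↑(c ^ (i : ℤ)) : k) * ↑c) • ((↑(v ^ (i : ℤ)) : A) * ↑v * ↑u) := by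
          rw [mul_smul_comm, smul_smul, mul_assoc]
      _ = (↑(c ^ ((i : ℤ) + 1)) : k) • ((↑(v ^ ((i : ℤ) + 1)) : A) * ↑u) := by
          rw [← Units.val_mul (c ^ (i : ℤ)) c, ← zpow_add_one,
            ← Units.val_mul (v ^ (i : ℤ)) v, ← zpow_add_one]
  | pred i ih =>
    have h' := swap_inv' u v c h
    calc (↑u : A) * ↑(v ^ (-(i : ℤ) - 1))
        = ↑u * (↑(v ^ (-(i : ℤ))) * ↑v⁻¹) := by
          rw [sub_eq_add_neg, zpow_add, zpow_neg_one, Units.val_mul]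
      _ = (↑u * ↑(v ^ (-(i : ℤ)))) * ↑v⁻¹ := (mul_assoc _ _ _).symm
      _ = ((↑(c ^ (-(i : ℤ))) : k) • ((↑(v ^ (-(i : ℤ))) : A) * ↑u)) * ↑v⁻¹ := by rw [ih]
      _ = (↑(c ^ (-(i : ℤ))) : k) • ((↑(v ^ (-(i : ℤ))) : A) * (↑u * ↑v⁻¹)) := by
          rw [smul_mul_assoc, mul_assoc]
      _ = (↑(c ^ (-(i : ℤ))) : k) •
            ((↑(v ^ (-(i : ℤ))) : A) * ((↑c⁻¹ : k) • ((↑v⁻¹ : A) * ↑u))) := by rw [h']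
      _ = ((↑(c ^ (-(i : ℤ))) : k) * ↑c⁻¹) • ((↑(v ^ (-(i : ℤ))) : A) * ↑v⁻¹ * ↑u) := by
          rw [mul_smul_comm, smul_smul, mul_assoc]
      _ = (↑(c ^ (-(i : ℤ) - 1)) : k) • ((↑(v ^ (-(i : ℤ) - 1)) : A) * ↑u) := by
          rw [← zpow_neg_one c, ← Units.val_mul (c ^ (-(i : ℤ))) (c ^ (-1 : ℤ)), ← zpow_add,
            ← zpow_neg_one v, ← Units.val_mul (v ^ (-(i : ℤ))) (v ^ (-1 : ℤ)), ← zpow_add,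
            show -(i : ℤ) + -1 = -(i : ℤ) - 1 from by ring]

lemma zpow_mul_zpow (u v : Aˣ) (c : kˣ)
    (h : (↑u : A) * ↑v = (↑c : k) • ((↑v : A) * ↑u)) (i j : ℤ) :
    (↑(u ^ i) : A) * ↑(v ^ j) = (↑(c ^ (i * j)) : k) • ((↑(v ^ j) : A) * ↑(u ^ i)) := by
  induction i using Int.induction_on with
  | zero => simp
  | succ i ih =>
    have hc := conj_zpow u v c h j
    calc (↑(u ^ ((i : ℤ) + 1)) : A) * ↑(v ^ j)
        = ↑(u ^ (i : ℤ)) * (↑u * ↑(v ^ j)) := by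
          rw [zpow_add_one, Units.val_mul, mul_assoc]
      _ = ↑(u ^ (i : ℤ)) * ((↑(c ^ j) : k) • ((↑(v ^ j) : A) * ↑u)) := by rw [hc]
      _ = (↑(c ^ j) : k) • ((↑(u ^ (i : ℤ)) : A) * ↑(v ^ j) * ↑u) := by
          rw [mul_smul_comm, mul_assoc]
      _ = (↑(c ^ j) : k) •
            (((↑(c ^ ((i : ℤ) * j)) : k) • ((↑(v ^ j) : A) * ↑(u ^ (i : ℤ)))) * ↑u) := by
          rw [ih]
      _ = ((↑(c ^ j) : k) * ↑(c ^ ((i : ℤ) * j))) •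
            ((↑(v ^ j) : A) * (↑(u ^ (i : ℤ)) * ↑u)) := by
          rw [smul_mul_assoc, smul_smul, mul_assoc]
      _ = (↑(c ^ (((i : ℤ) + 1) * j)) : k) • ((↑(v ^ j) : A) * ↑(u ^ ((i : ℤ) + 1))) := by
          rw [← Units.val_mul (c ^ j) (c ^ ((i : ℤ) * j)), ← zpow_add,
            ← Units.val_mul (u ^ (i : ℤ)) u, ← zpow_add_one,
            show j + (i : ℤ) * j = ((i : ℤ) + 1) * j from by ring]
  | pred i ih =>
    have hinv : (↑u⁻¹ : A) * ↑v = (↑c⁻¹ : k) • ((↑v : A) * ↑u⁻¹) := swap_inv u v c h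
    have hc := conj_zpow u⁻¹ v c⁻¹ hinv j
    calc (↑(u ^ (-(i : ℤ) - 1)) : A) * ↑(v ^ j)
        = ↑(u ^ (-(i : ℤ))) * (↑u⁻¹ * ↑(v ^ j)) := by
          rw [sub_eq_add_neg, zpow_add, zpow_neg_one, Units.val_mul, mul_assoc]
      _ = ↑(u ^ (-(i : ℤ))) * ((↑(c⁻¹ ^ j) : k) • ((↑(v ^ j) : A) * ↑u⁻¹)) := by rw [hc]
      _ = (↑(c⁻¹ ^ j) : k) • ((↑(u ^ (-(i : ℤ))) : A) * ↑(v ^ j) * ↑u⁻¹) := by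
          rw [mul_smul_comm, mul_assoc]
      _ = (↑(c⁻¹ ^ j) : k) •
            (((↑(c ^ (-(i : ℤ) * j)) : k) • ((↑(v ^ j) : A) * ↑(u ^ (-(i : ℤ))))) * ↑u⁻¹) := by
          rw [ih]
      _ = ((↑(c⁻¹ ^ j) : k) * ↑(c ^ (-(i : ℤ) * j))) •
            ((↑(v ^ j) : A) * (↑(u ^ (-(i : ℤ))) * ↑u⁻¹)) := by
          rw [smul_mul_assoc, smul_smul, mul_assoc]
      _ = (↑(c ^ ((-(i : ℤ) - 1) * j)) : k) • ((↑(v ^ j) : A) * ↑(u ^ (-(i : ℤ) - 1))) := by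
          rw [inv_zpow' c j, ← Units.val_mul (c ^ (-j)) (c ^ (-(i : ℤ) * j)), ← zpow_add,
            ← zpow_neg_one u, ← Units.val_mul (u ^ (-(i : ℤ))) (u ^ (-1 : ℤ)), ← zpow_add,
            show -j + -(i : ℤ) * j = (-(i : ℤ) - 1) * j from by ring,
            show -(i : ℤ) + -1 = -(i : ℤ) - 1 from by ring]

end conj

/-- The unit `y^j x^i` for `p = (i, j)`. -/
noncomputable def uM (p : ℤ × ℤ) : (QuantumTorus k q)ˣ := uY q ^ p.2 * uX q ^ p.1

/-- The monomial `y^j x^i` for `p = (i, j)`. -/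
noncomputable def M (p : ℤ × ℤ) : QuantumTorus k q := ↑(uM q p)

variable (hq0 : q ≠ 0)

lemma M_mul (p p' : ℤ × ℤ) :
    M q p * M q p' = (↑(Units.mk0 q hq0 ^ (p.1 * p'.2)) : k) • M q (p + p') := by
  have key := zpow_mul_zpow (uX q) (uY q) (Units.mk0 q hq0) (XY q hq0) p.1 p'.2
  rw [M, M, uM, uM, Units.val_mul, Units.val_mul]
  calc (↑(uY q ^ p.2) : QuantumTorus k q) * ↑(uX q ^ p.1) *
        (↑(uY q ^ p'.2) * ↑(uX q ^ p'.1))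
      = ↑(uY q ^ p.2) * (↑(uX q ^ p.1) * ↑(uY q ^ p'.2)) * ↑(uX q ^ p'.1) := by
        rw [mul_assoc, mul_assoc, mul_assoc]
    _ = (↑(Units.mk0 q hq0 ^ (p.1 * p'.2)) : k) •
        ((↑(uY q ^ p.2) : QuantumTorus k q) * (↑(uY q ^ p'.2) * ↑(uX q ^ p.1)) *
          ↑(uX q ^ p'.1)) := by
        rw [key, mul_smul_comm, smul_mul_assoc]
    _ = (↑(Units.mk0 q hq0 ^ (p.1 * p'.2)) : k) • M q (p + p') := by
        congr 1
        rw [M, uM, Units.val_mul, Prod.fst_add, Prod.snd_add,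
          ← mul_assoc (↑(uY q ^ p.2) : QuantumTorus k q) (↑(uY q ^ p'.2)) (↑(uX q ^ p.1)),
          ← Units.val_mul (uY q ^ p.2) (uY q ^ p'.2), ← zpow_add, mul_assoc,
          ← Units.val_mul (uX q ^ p.1) (uX q ^ p'.1), ← zpow_add]

lemma one_eq_M : (1 : QuantumTorus k q) = M q (0, 0) := by
  rw [M, uM]
  simp

lemma conj_X (p : ℤ × ℤ) :
    (↑(uX q) : QuantumTorus k q) * M q p * ↑(uX q)⁻¹ =
      (↑(Units.mk0 q hq0 ^ p.2) : k) • M q p := by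
  have hc := conj_zpow (uX q) (uY q) (Units.mk0 q hq0) (XY q hq0) p.2
  have huu : (↑(uX q) : QuantumTorus k q) * ↑(uX q ^ p.1) * ↑(uX q)⁻¹ =
      ↑(uX q ^ p.1) := by
    rw [← Units.val_mul, ← Units.val_mul]
    exact congrArg Units.val (by group)
  rw [M, uM, Units.val_mul]
  calc (↑(uX q) : QuantumTorus k q) * (↑(uY q ^ p.2) * ↑(uX q ^ p.1)) * ↑(uX q)⁻¹
      = (↑(uX q) * ↑(uY q ^ p.2)) * ↑(uX q ^ p.1) * ↑(uX q)⁻¹ := by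
        rw [← mul_assoc]
    _ = ((↑(Units.mk0 q hq0 ^ p.2) : k) •
          ((↑(uY q ^ p.2) : QuantumTorus k q) * ↑(uX q))) * ↑(uX q ^ p.1) * ↑(uX q)⁻¹ := by
        rw [hc]
    _ = (↑(Units.mk0 q hq0 ^ p.2) : k) •
          ((↑(uY q ^ p.2) : QuantumTorus k q) *
            (↑(uX q) * ↑(uX q ^ p.1) * ↑(uX q)⁻¹)) := by
        rw [smul_mul_assoc, smul_mul_assoc]
        congr 1
        rw [mul_assoc (↑(uY q ^ p.2) : QuantumTorus k q) (↑(uX q)) (↑(uX q ^ p.1)),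
          mul_assoc (↑(uY q ^ p.2) : QuantumTorus k q)]
    _ = (↑(Units.mk0 q hq0 ^ p.2) : k) • M q p := by
        rw [huu, M, uM, Units.val_mul]

lemma conj_Y (p : ℤ × ℤ) :
    (↑(uY q) : QuantumTorus k q) * M q p * ↑(uY q)⁻¹ =
      (↑(Units.mk0 q hq0 ^ (-p.1)) : k) • M q p := by
  have hswap : (↑(uY q) : QuantumTorus k q) * ↑(uX q) =
      (↑(Units.mk0 q hq0)⁻¹ : k) • ((↑(uX q) : QuantumTorus k q) * ↑(uY q)) := by
    calc (↑(uY q) : QuantumTorus k q) * ↑(uX q)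
        = (↑(Units.mk0 q hq0)⁻¹ : k) •
            ((↑(Units.mk0 q hq0) : k) • ((↑(uY q) : QuantumTorus k q) * ↑(uX q))) := by
          rw [smul_smul, ← Units.val_mul (Units.mk0 q hq0)⁻¹ (Units.mk0 q hq0),
            inv_mul_cancel, Units.val_one, one_smul]
      _ = _ := by rw [← XY q hq0]
  have hcY := conj_zpow (uY q) (uX q) (Units.mk0 q hq0)⁻¹ hswap p.1
  have hvv : (↑(uY q) : QuantumTorus k q) * ↑(uY q ^ p.2) =
      ↑(uY q ^ p.2) * ↑(uY q) := by
    rw [← Units.val_mul, ← Units.val_mul]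
    exact congrArg Units.val (by group)
  rw [M, uM, Units.val_mul]
  calc (↑(uY q) : QuantumTorus k q) * (↑(uY q ^ p.2) * ↑(uX q ^ p.1)) * ↑(uY q)⁻¹
      = ↑(uY q ^ p.2) * (↑(uY q) * ↑(uX q ^ p.1)) * ↑(uY q)⁻¹ := by
        rw [← mul_assoc, hvv,
          mul_assoc (↑(uY q ^ p.2) : QuantumTorus k q) (↑(uY q)) (↑(uX q ^ p.1))]
    _ = ↑(uY q ^ p.2) *
          ((↑((Units.mk0 q hq0)⁻¹ ^ p.1) : k) •
            ((↑(uX q ^ p.1) : QuantumTorus k q) * ↑(uY q))) * ↑(uY q)⁻¹ := by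
        rw [hcY]
    _ = (↑((Units.mk0 q hq0)⁻¹ ^ p.1) : k) •
          ((↑(uY q ^ p.2) : QuantumTorus k q) * ↑(uX q ^ p.1) * (↑(uY q) * ↑(uY q)⁻¹)) := by
        rw [mul_smul_comm, smul_mul_assoc]
        congr 1
        rw [← mul_assoc (↑(uY q ^ p.2) : QuantumTorus k q) (↑(uX q ^ p.1)) (↑(uY q)),
          mul_assoc]
    _ = (↑(Units.mk0 q hq0 ^ (-p.1)) : k) • M q p := by
        rw [Units.mul_inv, mul_one, M, uM, Units.val_mul, inv_zpow']

lemma span_M_eq_top (hq0 : q ≠ 0) :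
    Submodule.span k (Set.range (M q)) = ⊤ := by
  rw [eq_top_iff]
  rintro z -
  obtain ⟨w, rfl⟩ := RingQuot.mkAlgHom_surjective k (QTorusRel k q) z
  have hmul : ∀ x y : QuantumTorus k q, x ∈ Submodule.span k (Set.range (M q)) →
      y ∈ Submodule.span k (Set.range (M q)) →
      x * y ∈ Submodule.span k (Set.range (M q)) := by
    intro x y hx hy
    induction hx using Submodule.span_induction with
    | mem x hx =>
      induction hy using Submodule.span_induction with
      | mem y hy =>
        obtain ⟨p, rfl⟩ := hx
        obtain ⟨p', rfl⟩ := hy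
        rw [M_mul q hq0]
        exact Submodule.smul_mem _ _ (Submodule.subset_span ⟨p + p', rfl⟩)
      | zero => rw [mul_zero]; exact Submodule.zero_mem _
      | add y₁ y₂ hy₁ hy₂ ih₁ ih₂ =>
        rw [mul_add]; exact Submodule.add_mem _ ih₁ ih₂
      | smul a y₁ hy₁ ih => rw [mul_smul_comm]; exact Submodule.smul_mem _ _ ih
    | zero => rw [zero_mul]; exact Submodule.zero_mem _
    | add x₁ x₂ hx₁ hx₂ ih₁ ih₂ =>
      rw [add_mul]; exact Submodule.add_mem _ ih₁ ih₂
    | smul a x₁ hx₁ ih => rw [smul_mul_assoc]; exact Submodule.smul_mem _ _ ih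
  induction w using FreeAlgebra.induction with
  | grade0 r =>
    rw [AlgHom.commutes, Algebra.algebraMap_eq_smul_one, one_eq_M q]
    exact Submodule.smul_mem _ _ (Submodule.subset_span ⟨(0, 0), rfl⟩)
  | grade1 i =>
    fin_cases i
    · refine Submodule.subset_span ⟨((1 : ℤ), (0 : ℤ)), ?_⟩
      rw [M, uM]
      show (↑(uY q ^ (0 : ℤ) * uX q ^ (1 : ℤ)) : QuantumTorus k q) = _
      simp [uX, X]
    · refine Submodule.subset_span ⟨((-1 : ℤ), (0 : ℤ)), ?_⟩
      rw [M, uM]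
      show (↑(uY q ^ (0 : ℤ) * uX q ^ (-1 : ℤ)) : QuantumTorus k q) = _
      simp only [zpow_zero, zpow_neg_one, one_mul]
      rfl
    · refine Submodule.subset_span ⟨((0 : ℤ), (1 : ℤ)), ?_⟩
      rw [M, uM]
      show (↑(uY q ^ (1 : ℤ) * uX q ^ (0 : ℤ)) : QuantumTorus k q) = _
      simp [uY, Y]
    · refine Submodule.subset_span ⟨((0 : ℤ), (-1 : ℤ)), ?_⟩
      rw [M, uM]
      show (↑(uY q ^ (-1 : ℤ) * uX q ^ (0 : ℤ)) : QuantumTorus k q) = _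
      simp only [zpow_zero, zpow_neg_one, mul_one]
      rfl
  | mul a b ha hb => rw [map_mul]; exact hmul _ _ ha hb
  | add a b ha hb => rw [map_add]; exact Submodule.add_mem _ ha hb

/-- Conjugating-and-subtracting shrinks the support of a representation,
staying inside the ideal. -/
lemma shrink (I : TwoSidedIdeal (QuantumTorus k q)) (u : (QuantumTorus k q)ˣ)
    (w : ℤ × ℤ → k) (hconj : ∀ p, (↑u : QuantumTorus k q) * M q p * ↑u⁻¹ = w p • M q p)
    (c : (ℤ × ℤ) →₀ k) (hcI : (c.sum fun p a => a • M q p) ∈ I) (p0 : ℤ × ℤ) :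
    ∃ c' : (ℤ × ℤ) →₀ k, (∀ p, c' p = (w p - w p0) * c p) ∧
      c'.support ⊆ c.support ∧ ((c'.sum fun p a => a • M q p) ∈ I) := by
  classical
  have hf : ∀ p : ℤ × ℤ, (w p - w p0) * c p ≠ 0 → p ∈ c.support := by
    intro p hp
    by_contra hmem
    apply hp
    rw [Finsupp.notMem_support_iff.mp hmem, mul_zero]
  refine ⟨Finsupp.onFinset c.support (fun p => (w p - w p0) * c p) hf,
    fun p => Finsupp.onFinset_apply, Finsupp.support_onFinset_subset, ?_⟩
  have hb : ((↑u : QuantumTorus k q) * (c.sum fun p a => a • M q p) * ↑u⁻¹ -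
      w p0 • (c.sum fun p a => a • M q p)) ∈ I := by
    refine I.sub_mem (I.mul_mem_right _ _ (I.mul_mem_left _ _ hcI)) ?_
    rw [Algebra.smul_def]
    exact I.mul_mem_left _ _ hcI
  have heq : ((Finsupp.onFinset c.support (fun p => (w p - w p0) * c p) hf).sum
      fun p a => a • M q p) =
      (↑u : QuantumTorus k q) * (c.sum fun p a => a • M q p) * ↑u⁻¹ -
        w p0 • (c.sum fun p a => a • M q p) := by
    rw [Finsupp.sum_of_support_subset _ Finsupp.support_onFinset_subset _
      (fun p _ => by simp)]
    rw [Finsupp.sum_of_support_subset c subset_rfl (fun p a => a • M q p)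
      (fun p _ => by simp)]
    rw [Finset.mul_sum, Finset.sum_mul, Finset.smul_sum, ← Finset.sum_sub_distrib]
    refine Finset.sum_congr rfl fun p hp => ?_
    rw [Finsupp.onFinset_apply, mul_smul_comm, smul_mul_assoc, hconj p, smul_smul,
      smul_smul, ← sub_smul]
    congr 1
    ring
  rw [heq]
  exact hb

lemma qzpow_injective (hq : ∀ n : ℕ, 0 < n → q ^ n ≠ 1) (j j' : ℤ)
    (h : (↑(Units.mk0 q hq0 ^ j) : k) = ↑(Units.mk0 q hq0 ^ j')) : j = j' := by
  have key : ∀ m : ℤ, q ^ m = 1 → m = 0 := by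
    intro m hm
    by_contra hm0
    have h1 : q ^ (m.natAbs : ℤ) = 1 := by
      rcases Int.natAbs_eq m with h | h
      · rw [← h]; exact hm
      · rw [h, zpow_neg, inv_eq_one] at hm; exact hm
    rw [zpow_natCast] at h1
    exact hq m.natAbs (Nat.pos_of_ne_zero fun h => hm0 (Int.natAbs_eq_zero.mp h)) h1
  simp only [Units.val_zpow_eq_zpow_val, Units.val_mk0] at h
  have : q ^ (j - j') = 1 := by
    rw [zpow_sub₀ hq0, h, div_self (zpow_ne_zero _ hq0)]
  have := key _ this
  omega

lemma main_induction (hq0 : q ≠ 0) (hq : ∀ n : ℕ, 0 < n → q ^ n ≠ 1)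
    (I : TwoSidedIdeal (QuantumTorus k q)) :
    ∀ n (c : (ℤ × ℤ) →₀ k), c.support.card ≤ n → c ≠ 0 →
      (c.sum fun p a => a • M q p) ∈ I → (1 : QuantumTorus k q) ∈ I := by
  intro n
  induction n with
  | zero =>
    intro c hcard hc0 _
    exfalso
    apply hc0
    rw [← Finsupp.support_eq_empty, ← Finset.card_eq_zero]
    omega
  | succ n ih =>
    intro c hcard hc0 hcI
    by_cases h1 : c.support.card ≤ 1
    · -- exactly one monomial: it is invertible
      have hone : c.support.card = 1 := by
        rcases Nat.lt_or_ge c.support.card 1 with h | h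
        · exfalso
          apply hc0
          rw [← Finsupp.support_eq_empty, ← Finset.card_eq_zero]
          omega
        · omega
      obtain ⟨p, hp, hsingle⟩ := Finsupp.card_support_eq_one.mp hone
      have hsum : (c.sum fun p a => a • M q p) = c p • M q p := by
        conv_lhs => rw [hsingle]
        rw [Finsupp.sum_single_index (by rw [zero_smul])]
      rw [hsum] at hcI
      have hM : M q p ∈ I := by
        have h2 : (c p)⁻¹ • (c p • M q p) ∈ I := by
          rw [Algebra.smul_def]
          exact I.mul_mem_left _ _ hcI
        rwa [smul_smul, inv_mul_cancel₀ hp, one_smul] at h2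
      have : (↑(uM q p)⁻¹ : QuantumTorus k q) * M q p ∈ I := I.mul_mem_left _ _ hM
      rwa [M, Units.inv_mul] at this
    · -- at least two monomials: shrink the support
      push_neg at h1
      obtain ⟨p0, hp0, p1, hp1, hne⟩ := Finset.one_lt_card.mp h1
            -- choose the conjugating unit according to which coordinate differs
      rcases Classical.em (p0.2 = p1.2) with hsnd | hsnd
      · -- first coordinates differ: conjugate by y
        have hfst : p0.1 ≠ p1.1 := by
          intro h
          exact hne (Prod.ext h hsnd)
        obtain ⟨c', hc'app, hc'supp, hc'I⟩ := shrink q I (uY q)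
          (fun p => (↑(Units.mk0 q hq0 ^ (-p.1)) : k)) (fun p => conj_Y q hq0 p) c hcI p0
        refine ih c' ?_ ?_ hc'I
        · have hzero : c' p0 = 0 := by rw [hc'app, sub_self, zero_mul]
          have hsub : c'.support ⊆ c.support.erase p0 := by
            intro p hp
            refine Finset.mem_erase.mpr ⟨?_, hc'supp hp⟩
            intro h
            rw [h] at hp
            exact Finsupp.mem_support_iff.mp hp hzero
          calc c'.support.card ≤ (c.support.erase p0).card := Finset.card_le_card hsub
            _ = c.support.card - 1 := Finset.card_erase_of_mem hp0
            _ ≤ n := by omega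
        · intro h
          have : c' p1 = 0 := by rw [h]; rfl
          rw [hc'app, mul_eq_zero, sub_eq_zero] at this
          rcases this with h' | h'
          · have h2 := qzpow_injective q hq0 hq _ _ h'
            exact hfst (by omega)
          · exact Finsupp.mem_support_iff.mp hp1 h'
      · -- second coordinates differ: conjugate by x
        obtain ⟨c', hc'app, hc'supp, hc'I⟩ := shrink q I (uX q)
          (fun p => (↑(Units.mk0 q hq0 ^ p.2) : k)) (fun p => conj_X q hq0 p) c hcI p0
        refine ih c' ?_ ?_ hc'I
        · have hzero : c' p0 = 0 := by rw [hc'app, sub_self, zero_mul]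
          have hsub : c'.support ⊆ c.support.erase p0 := by
            intro p hp
            refine Finset.mem_erase.mpr ⟨?_, hc'supp hp⟩
            intro h
            rw [h] at hp
            exact Finsupp.mem_support_iff.mp hp hzero
          calc c'.support.card ≤ (c.support.erase p0).card := Finset.card_le_card hsub
            _ = c.support.card - 1 := Finset.card_erase_of_mem hp0
            _ ≤ n := by omega
        · intro h
          have : c' p1 = 0 := by rw [h]; rfl
          rw [hc'app, mul_eq_zero, sub_eq_zero] at this
          rcases this with h' | h'
          · exact hsnd (qzpow_injective q hq0 hq _ _ h').symm
          · exact Finsupp.mem_support_iff.mp hp1 h'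

end QTorusAux

/-- If `q` is not a root of unity, the quantum torus `O_q((k×)²)` is a simple ring:
its only two-sided ideals are `0` and the whole ring. -/
theorem quantumTorus_simple {k : Type*} [Field k] (q : k) (hq0 : q ≠ 0)
    (hq : ∀ n : ℕ, 0 < n → q ^ n ≠ 1) (I : TwoSidedIdeal (QuantumTorus k q)) :
    I = ⊥ ∨ I = ⊤ := by
  by_cases hI : I = ⊥
  · exact Or.inl hI
  right
  obtain ⟨a, haI, ha0⟩ : ∃ a, a ∈ I ∧ a ≠ 0 := by
    by_contra h
    push_neg at h
    apply hI
    rw [eq_bot_iff]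
    intro x hx
    rw [TwoSidedIdeal.mem_bot]
    exact h x hx
  have hspan : a ∈ Submodule.span k (Set.range (QTorusAux.M q)) := by
    rw [QTorusAux.span_M_eq_top q hq0]
    trivial
  obtain ⟨c, hc⟩ := Finsupp.mem_span_range_iff_exists_finsupp.mp hspan
  have hc0 : c ≠ 0 := by
    intro h
    rw [h, Finsupp.sum_zero_index] at hc
    exact ha0 hc.symm
  exact (TwoSidedIdeal.one_mem_iff I).mp
    (QTorusAux.main_induction q hq0 hq I c.support.card c le_rfl hc0
      (by rw [hc]; exact haI))
end

section
/- Let R be a commutative Poisson algebra over a field of characteristic 0 and let I be a Poisson ideal of R. Then the radical √I of I is again a Poisson ideal. -/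
/-- An ideal `I` of a commutative algebra with a bracket `B` is a Poisson ideal if
`{R, I} ⊆ I`. -/
def IsPoissonIdeal {k R : Type*} [CommSemiring k] [CommRing R] [Algebra k R]
    (B : R →ₗ[k] R →ₗ[k] R) (I : Ideal R) : Prop :=
  ∀ r a : R, a ∈ I → B r a ∈ I

variable {k R : Type*} [Field k] [CommRing R] [Algebra k R]

private lemma descend_aux (D : Derivation k R R) {I : Ideal R}
    (hD : ∀ a ∈ I, D a ∈ I) (x : R) :
    ∀ m e : ℕ, (∃ c : ℕ, 0 < c ∧ (c : R) * (x ^ m * (D x) ^ (e + 1)) ∈ I) →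
      ∃ c : ℕ, 0 < c ∧ (c : R) * (D x) ^ (e + 1 + 2 * m) ∈ I := by
  intro m
  induction m with
  | zero =>
    rintro e ⟨c, hc, h⟩
    exact ⟨c, hc, by simpa using h⟩
  | succ m ih =>
    rintro e ⟨c, hc, h⟩
    have h2 : D ((c : R) * (x ^ (m + 1) * (D x) ^ (e + 1))) ∈ I := hD _ h
    have hDc : D ((c : R) * (x ^ (m + 1) * (D x) ^ (e + 1)))
        = (c : R) * D (x ^ (m + 1) * (D x) ^ (e + 1)) := by
      rw [← nsmul_eq_mul, ← nsmul_eq_mul, map_nsmul]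
    have hexp : D (x ^ (m + 1) * (D x) ^ (e + 1))
        = (m + 1 : ℕ) • x ^ m • D x * (D x) ^ (e + 1)
          + x ^ (m + 1) * ((e + 1 : ℕ) • (D x) ^ e • D (D x)) := by
      rw [Derivation.leibniz, Derivation.leibniz_pow, Derivation.leibniz_pow]
      simp [smul_eq_mul]
      ring
    have h3 : D x * D ((c : R) * (x ^ (m + 1) * (D x) ^ (e + 1))) ∈ I :=
      I.mul_mem_left _ h2
    have h4 : ((e + 1 : ℕ) : R) * D (D x) * ((c : R) * (x ^ (m + 1) * (D x) ^ (e + 1))) ∈ I :=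
      I.mul_mem_left _ h
    have key : ((c * (m + 1) : ℕ) : R) * (x ^ m * (D x) ^ (e + 2 + 1)) ∈ I := by
      have heq : ((c * (m + 1) : ℕ) : R) * (x ^ m * (D x) ^ (e + 2 + 1))
          = D x * D ((c : R) * (x ^ (m + 1) * (D x) ^ (e + 1)))
            - ((e + 1 : ℕ) : R) * D (D x) * ((c : R) * (x ^ (m + 1) * (D x) ^ (e + 1))) := by
        rw [hDc, hexp]
        simp [smul_eq_mul]
        ring
      rw [heq]
      exact I.sub_mem h3 h4
    obtain ⟨c', hc', hmem⟩ := ih (e + 2) ⟨c * (m + 1), by positivity, key⟩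
    exact ⟨c', hc', by
      have : e + 2 + 1 + 2 * m = e + 1 + 2 * (m + 1) := by ring
      rwa [this] at hmem⟩

private lemma cancel_nat [CharZero k] {I : Ideal R} {c : ℕ} (hc : 0 < c) {y : R}
    (h : (c : R) * y ∈ I) : y ∈ I := by
  have hck : ((c : k)) ≠ 0 := Nat.cast_ne_zero.mpr hc.ne'
  have : y = algebraMap k R (c : k)⁻¹ * ((c : R) * y) := by
    rw [← mul_assoc]
    have : algebraMap k R (c : k)⁻¹ * (c : R) = 1 := by
      rw [show ((c : ℕ) : R) = algebraMap k R (c : k) by simp, ← map_mul,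
        inv_mul_cancel₀ hck, map_one]
    rw [this, one_mul]
  rw [this]
  exact I.mul_mem_left _ h

/-- In characteristic zero, the radical of a Poisson ideal is a Poisson ideal. -/
theorem isPoissonIdeal_radical [CharZero k] (B : R →ₗ[k] R →ₗ[k] R)
    (hanti : ∀ a b : R, B a b = - B b a)
    (hjac : ∀ a b c : R, B a (B b c) + B b (B c a) + B c (B a b) = 0)
    (hleib : ∀ a x y : R, B a (x * y) = B a x * y + x * B a y)
    {I : Ideal R} (hI : IsPoissonIdeal B I) :
    IsPoissonIdeal B I.radical := by
  intro r a ha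
  obtain ⟨n, hn⟩ := Ideal.mem_radical_iff.mp ha
  -- build the derivation D = B r
  have hone : B r 1 = 0 := by
    have := hleib r 1 1
    simp only [mul_one, one_mul] at this
    linear_combination -this
  set D : Derivation k R R :=
    { toLinearMap := B r
      map_one_eq_zero' := hone
      leibniz' := fun x y => by
        simp only [LinearMap.coe_mk, smul_eq_mul]
        rw [hleib r x y]; ring } with hDdef
  have hDapp : ∀ y : R, D y = B r y := fun y => rfl
  have hD : ∀ a ∈ I, D a ∈ I := fun a ha => hI r a ha
  rcases Nat.eq_zero_or_pos n with hn0 | hnpos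
  · subst hn0
    simp at hn
    have : I = ⊤ := Ideal.eq_top_of_unit_mem I 1 1 hn (by ring)
    rw [Ideal.mem_radical_iff]
    exact ⟨1, by simp [this]⟩
  · have start : ∃ c : ℕ, 0 < c ∧ (c : R) * (a ^ (n - 1) * (D a) ^ (0 + 1)) ∈ I := by
      refine ⟨n, hnpos, ?_⟩
      have := hD _ hn
      rw [Derivation.leibniz_pow] at this
      simpa [smul_eq_mul, mul_assoc] using this
    obtain ⟨c, hc, hmem⟩ := descend_aux D hD a (n - 1) 0 start
    rw [Ideal.mem_radical_iff]
    exact ⟨0 + 1 + 2 * (n - 1), by rw [← hDapp]; exact cancel_nat (k := k) hc hmem⟩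
end

section
/- Let R be a commutative noetherian Poisson algebra over a field of characteristic 0. If P is a Poisson ideal that is Poisson-prime, then P is a prime ideal of R. Conversely, prime Poisson ideals are Poisson-prime. Hence in this setting the Poisson-prime ideals are exactly the prime ideals that are Poisson ideals. -/
variable {k R : Type*} [Field k] [CommRing R] [Algebra k R]

/-- A proper Poisson ideal `P` is Poisson-prime if `IJ ⊆ P` implies `I ⊆ P` or `J ⊆ P` for
all Poisson ideals `I`, `J`. -/
def IsPoissonPrime {k R : Type*} [CommSemiring k] [CommRing R] [Algebra k R]
    (B : R →ₗ[k] R →ₗ[k] R) (P : Ideal R) : Prop :=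
  P ≠ ⊤ ∧ IsPoissonIdeal B P ∧
    ∀ I J : Ideal R, IsPoissonIdeal B I → IsPoissonIdeal B J →
      I * J ≤ P → I ≤ P ∨ J ≤ P

section Aux

variable (D : R →ₗ[k] R) (hl : ∀ x y : R, D (x * y) = D x * y + x * D y)

include hl in
lemma Done : D 1 = 0 := by
  have := hl 1 1
  simp only [mul_one, one_mul] at this
  exact (left_eq_add.mp this)

include hl in
lemma Dpow (x : R) : ∀ p : ℕ, D (x ^ p) = (p : R) * x ^ (p - 1) * D x := by
  have key : ∀ p : ℕ, D (x ^ (p + 1)) = ((p : R) + 1) * x ^ p * D x := by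
    intro p
    induction p with
    | zero => simp
    | succ p ih =>
      rw [pow_succ, mul_comm (x ^ (p+1)) x, hl, ih]
      push_cast
      ring
  intro p
  cases p with
  | zero => simpa using Done D hl
  | succ p => simpa using key p
end Aux

section Rad
variable (D : R →ₗ[k] R) (hl : ∀ x y : R, D (x * y) = D x * y + x * D y)

include hl in
lemma Drad (I : Ideal R) (hDI : ∀ x ∈ I, D x ∈ I)
    (hu : ∀ n : ℕ, n ≠ 0 → IsUnit ((n : R))) {a : R} {n : ℕ} (ha : a ^ n ∈ I) :
    ∀ j, j ≤ n → a ^ (n - j) * D a ^ (2 * j) ∈ I := by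
  intro j
  induction j with
  | zero => intro _; simpa using ha
  | succ j ih =>
    intro hj
    have hc : a ^ (n - j) * D a ^ (2 * j) ∈ I := ih (by omega)
    have hnj : n - j = (n - (j + 1)) + 1 := by omega
    set m := n - (j + 1) with hm
    rw [hnj] at hc
    have hE : D (a ^ (m + 1) * D a ^ (2 * j)) * D a ∈ I :=
      I.mul_mem_right _ (hDI _ hc)
    have hexp : D (a ^ (m + 1) * D a ^ (2 * j)) * D a
        = (((m : R) + 1)) * (a ^ m * D a ^ (2 * (j + 1)))
          + ((2 * j : ℕ) : R) * D (D a) * (a ^ (m + 1) * D a ^ (2 * j)) := by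
      rw [hl, Dpow D hl a (m + 1), Dpow D hl (D a) (2 * j)]
      rcases Nat.eq_zero_or_pos j with rfl | hjpos
      · simp; ring
      · have h2j : 2 * j - 1 + 1 = 2 * j := by omega
        have e1 : D a ^ (2 * j) = D a ^ (2 * j - 1) * D a := by
          rw [← pow_succ, h2j]
        have e2 : D a ^ (2 * (j + 1)) = D a ^ (2 * j - 1) * D a * D a * D a := by
          rw [← pow_succ, ← pow_succ, ← pow_succ, h2j]; ring_nf
        rw [e1, e2]
        simp only [Nat.add_sub_cancel]
        push_cast
        ring
    have h2 : ((2 * j : ℕ) : R) * D (D a) * (a ^ (m + 1) * D a ^ (2 * j)) ∈ I :=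
      I.mul_mem_left _ hc
    have h3 : ((m : R) + 1) * (a ^ m * D a ^ (2 * (j + 1))) ∈ I := by
      have := I.sub_mem hE h2
      rwa [hexp, add_sub_cancel_right] at this
    have hum : IsUnit ((m : R) + 1) := by
      simpa using hu (m + 1) (Nat.succ_ne_zero m)
    exact (Ideal.unit_mul_mem_iff_mem I hum).mp h3

include hl in
lemma Drad' (I : Ideal R) (hDI : ∀ x ∈ I, D x ∈ I)
    (hu : ∀ n : ℕ, n ≠ 0 → IsUnit ((n : R))) {a : R} (ha : a ∈ I.radical) :
    D a ∈ I.radical := by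
  obtain ⟨n, hn⟩ := ha
  refine ⟨2 * n, ?_⟩
  have := Drad D hl I hDI hu hn n le_rfl
  simpa using this

end Rad

section Main
variable (B : R →ₗ[k] R →ₗ[k] R)

lemma natUnit [CharZero k] (n : ℕ) (hn : n ≠ 0) : IsUnit ((n : R)) := by
  have h : ((n : R)) = algebraMap k R (n : k) := (map_natCast (algebraMap k R) n).symm
  rw [h]
  exact (isUnit_iff_ne_zero.mpr (Nat.cast_ne_zero.mpr hn)).map _

variable (hleib : ∀ a x y : R, B a (x * y) = B a x * y + x * B a y)

include hleib in
lemma poisson_mul {I J : Ideal R} (hI : IsPoissonIdeal B I) (hJ : IsPoissonIdeal B J) :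
    IsPoissonIdeal B (I * J) := by
  intro r a ha
  refine Submodule.mul_induction_on ha (fun i hi j hj => ?_) (fun x y hx hy => ?_)
  · rw [hleib]
    exact add_mem (Ideal.mul_mem_mul (hI r i hi) hj) (Ideal.mul_mem_mul hi (hJ r j hj))
  · rw [map_add]; exact add_mem hx hy

include hleib in
lemma poisson_pow {I : Ideal R} (hI : IsPoissonIdeal B I) (m : ℕ) :
    IsPoissonIdeal B (I ^ m) := by
  induction m with
  | zero => intro r a _; simp [Ideal.one_eq_top]
  | succ m ih => rw [pow_succ]; exact poisson_mul B hleib ih hI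

include hleib in
lemma poisson_finset_prod (s : Finset (Ideal R)) (h : ∀ Q ∈ s, IsPoissonIdeal B Q) :
    IsPoissonIdeal B (∏ Q ∈ s, Q) := by
  classical
  induction s using Finset.induction_on with
  | empty => intro r a _; simp [Ideal.one_eq_top]
  | insert _ _ hnm ih =>
    rw [Finset.prod_insert hnm]
    exact poisson_mul B hleib (h _ (Finset.mem_insert_self _ _))
      (ih fun Q hQ => h Q (Finset.mem_insert_of_mem hQ))

end Main


/-- Over a field of characteristic zero, in a commutative noetherian Poisson algebra, the
Poisson-prime ideals are exactly the prime ideals that are Poisson ideals. -/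
theorem isPoissonPrime_iff_isPrime [CharZero k] [IsNoetherianRing R]
    (B : R →ₗ[k] R →ₗ[k] R)
    (hanti : ∀ a b : R, B a b = - B b a)
    (hjac : ∀ a b c : R, B a (B b c) + B b (B c a) + B c (B a b) = 0)
    (hleib : ∀ a x y : R, B a (x * y) = B a x * y + x * B a y)
    (P : Ideal R) :
    IsPoissonPrime B P ↔ (P.IsPrime ∧ IsPoissonIdeal B P) := by
  classical
  constructor
  · rintro ⟨hne, hpois, hmin⟩
    have hu : ∀ n : ℕ, n ≠ 0 → IsUnit ((n : R)) := fun n hn => natUnit (k := k) (R := R) n hn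
    -- the radical of P is a Poisson ideal
    have hradP : IsPoissonIdeal B P.radical := fun r a ha =>
      Drad' (B r) (hleib r) P (hpois r) hu ha
    -- a Poisson ideal with a power inside P is inside P
    have hpowle : ∀ (I : Ideal R), IsPoissonIdeal B I → ∀ m : ℕ, I ^ (m + 1) ≤ P → I ≤ P := by
      intro I hI m
      induction m with
      | zero => simpa using id
      | succ m ih =>
        intro h
        rw [pow_succ] at h
        rcases hmin _ _ (poisson_pow B hleib hI (m + 1)) hI h with h1 | h1
        · exact ih h1
        · exact h1
    -- P is radical
    obtain ⟨mr, hmr⟩ := Ideal.exists_radical_pow_le_of_fg P (IsNoetherian.noetherian _)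
    have hrad : P.radical = P := by
      refine le_antisymm ?_ Ideal.le_radical
      rcases Nat.eq_zero_or_pos mr with rfl | hpos
      · exact absurd (top_le_iff.mp (by simpa using hmr)) hne
      · obtain ⟨m', rfl⟩ := Nat.exists_eq_add_of_lt hpos
        exact hpowle _ hradP (0 + m') (by simpa using hmr)
    have hfin : P.minimalPrimes.Finite := by
      rw [Ideal.minimalPrimes_eq_comap]
      exact (minimalPrimes.finite_of_isNoetherianRing (R ⧸ P)).image _
    have hsinf : sInf P.minimalPrimes = P := by
      rw [Ideal.sInf_minimalPrimes, hrad]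
    set F := hfin.toFinset with hF
    -- every minimal prime over P is Poisson
    have hQpois : ∀ Q ∈ P.minimalPrimes, IsPoissonIdeal B Q := by
      intro Q hQ r a ha
      have hQprime : Q.IsPrime := hQ.1.1
      have hQF : Q ∈ F := hfin.mem_toFinset.mpr hQ
      set G := F.erase Q with hG
      have hnle : ¬ (G.inf id ≤ Q) := by
        intro hle
        obtain ⟨Q', hQ'G, hQ'Q⟩ := hQprime.inf_le'.mp hle
        have hQ'min : Q' ∈ P.minimalPrimes :=
          hfin.mem_toFinset.mp (Finset.mem_of_mem_erase hQ'G)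
        have : Q = Q' := le_antisymm (hQ.2 ⟨hQ'min.1.1, hQ'min.1.2⟩ hQ'Q) hQ'Q
        exact (Finset.ne_of_mem_erase hQ'G) this.symm
      obtain ⟨b, hbG, hbQ⟩ := SetLike.not_le_iff_exists.mp hnle
      have hab : a * b ∈ P := by
        rw [← hsinf]
        refine Ideal.mem_sInf.mpr fun {Q'} hQ' => ?_
        by_cases hQQ' : Q' = Q
        · exact hQQ' ▸ Q.mul_mem_right b ha
        · have : Q' ∈ G := Finset.mem_erase.mpr ⟨hQQ', hfin.mem_toFinset.mpr hQ'⟩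
          exact Q'.mul_mem_left a (Finset.inf_le (f := id) this hbG)
      have h1 : B r (a * b) ∈ Q := hQ.1.2 (hpois r _ hab)
      rw [hleib] at h1
      have h2 : a * B r b ∈ Q := Q.mul_mem_right _ ha
      have h3 : B r a * b ∈ Q := by
        have := Q.sub_mem h1 h2
        simpa using this
      rcases hQprime.mem_or_mem h3 with h | h
      · exact h
      · exact absurd h hbQ
    -- product of the minimal primes lies in P
    have hprod : (∏ Q ∈ F, Q) ≤ P := by
      calc (∏ Q ∈ F, Q) ≤ F.inf id := Ideal.prod_le_inf
        _ = sInf ↑F := Finset.inf_id_eq_sInf F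
        _ = sInf P.minimalPrimes := by rw [hfin.coe_toFinset]
        _ = P := hsinf
    -- extract a single minimal prime inside P
    have key : ∀ s : Finset (Ideal R), (∀ Q ∈ s, IsPoissonIdeal B Q) →
        (∏ Q ∈ s, Q) ≤ P → ∃ Q ∈ s, Q ≤ P := by
      intro s
      induction s using Finset.induction_on with
      | empty => intro _ h; exact absurd (top_le_iff.mp (by simpa using h)) hne
      | @insert Q s hnm ih =>
        intro hall h
        rw [Finset.prod_insert hnm] at h
        rcases hmin _ _ (hall _ (Finset.mem_insert_self _ _))
            (poisson_finset_prod B hleib s fun Q' hQ' => hall Q' (Finset.mem_insert_of_mem hQ'))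
            h with h1 | h1
        · exact ⟨Q, Finset.mem_insert_self _ _, h1⟩
        · obtain ⟨Q', hQ's, hQ'P⟩ := ih (fun Q' hQ' => hall Q' (Finset.mem_insert_of_mem hQ')) h1
          exact ⟨Q', Finset.mem_insert_of_mem hQ's, hQ'P⟩
    obtain ⟨Q, hQF, hQP⟩ := key F (fun Q hQ => hQpois Q (hfin.mem_toFinset.mp hQ)) hprod
    have hQmin := hfin.mem_toFinset.mp hQF
    have hPQ : P = Q := le_antisymm hQmin.1.2 hQP
    exact ⟨hPQ ▸ hQmin.1.1, hpois⟩
  · rintro ⟨hP, hpois⟩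
    exact ⟨hP.ne_top, hpois, fun I J _ _ h => hP.mul_le.mp h⟩
end

section
/- Let k be an algebraically closed field of characteristic 2 and R = k[x,y] the polynomial ring with the Poisson bracket determined by {x,y} = xy. Then for every λ ∈ k×, the principal ideal ⟨x^2 + λ^2 y^2⟩ is a Poisson ideal of R that is Poisson-prime but not a prime ideal. -/
open MvPolynomial

/-- The Poisson bracket on `k[x,y]` determined by `{x,y} = xy`:
`{f,g} = xy (∂f/∂x ∂g/∂y − ∂f/∂y ∂g/∂x)`. -/
noncomputable def xyBracket {k : Type*} [CommRing k]
    (f g : MvPolynomial (Fin 2) k) : MvPolynomial (Fin 2) k :=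
  X 0 * X 1 * (pderiv 0 f * pderiv 1 g - pderiv 1 f * pderiv 0 g)

/-- Poisson ideals for the bracket `{x,y} = xy`. -/
def IsXYPoissonIdeal {k : Type*} [CommRing k] (I : Ideal (MvPolynomial (Fin 2) k)) : Prop :=
  ∀ r a : MvPolynomial (Fin 2) k, a ∈ I → xyBracket r a ∈ I

section Aux

variable {k : Type*} [Field k] [CharP k 2] (c : k)

/-- The substitution `x ↦ x + cy`, `y ↦ y`. -/
noncomputable def sigmaHom : MvPolynomial (Fin 2) k →ₐ[k] MvPolynomial (Fin 2) k :=
  aeval ![X 0 + C c * X 1, X 1]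

lemma sigma_invol : (sigmaHom c).comp (sigmaHom c) = AlgHom.id k (MvPolynomial (Fin 2) k) := by
  apply MvPolynomial.algHom_ext
  intro i
  fin_cases i <;>
    simp [sigmaHom, Matrix.cons_val_zero, Matrix.cons_val_one] <;>
    · have h2 : (2 : MvPolynomial (Fin 2) k) = 0 := by
        exact_mod_cast CharP.cast_eq_zero (MvPolynomial (Fin 2) k) 2
      ring_nf
      linear_combination (C c * X 1 : MvPolynomial (Fin 2) k) * h2

/-- The substitution `x ↦ x + cy`, `y ↦ y` as an automorphism (it is an involution in char 2). -/
noncomputable def sigmaEquiv : MvPolynomial (Fin 2) k ≃ₐ[k] MvPolynomial (Fin 2) k :=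
  AlgEquiv.ofAlgHom (sigmaHom c) (sigmaHom c) (sigma_invol c) (sigma_invol c)

lemma prime_X0 : Prime (X 0 : MvPolynomial (Fin 2) k) :=
  (MulEquiv.prime_iff (MvPolynomial.finSuccEquiv k 1).toMulEquiv).mp (by
    show Prime ((MvPolynomial.finSuccEquiv k 1) (X 0))
    rw [finSuccEquiv_X_zero]; exact Polynomial.prime_X)

lemma prime_p : Prime (X 0 + C c * X 1 : MvPolynomial (Fin 2) k) := by
  have h := (MulEquiv.prime_iff (sigmaEquiv c).toMulEquiv).mpr (prime_X0 (k := k))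
  have e : (sigmaEquiv c).toMulEquiv (X 0) = (X 0 + C c * X 1 : MvPolynomial (Fin 2) k) := by
    show sigmaHom c (X 0) = _
    simp [sigmaHom]
  rwa [e] at h

lemma g_eq_p_sq : (X 0 : MvPolynomial (Fin 2) k) ^ 2 + C c ^ 2 * X 1 ^ 2 =
    (X 0 + C c * X 1) ^ 2 := by
  have h2 : (2 : MvPolynomial (Fin 2) k) = 0 := by
    exact_mod_cast CharP.cast_eq_zero (MvPolynomial (Fin 2) k) 2
  have h : (X 0 + C c * X 1 : MvPolynomial (Fin 2) k) ^ 2 =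
      X 0 ^ 2 + C c ^ 2 * X 1 ^ 2 + 2 * (X 0 * (C c * X 1)) := by ring
  rw [h, h2, zero_mul, add_zero]

lemma pderiv_g (i : Fin 2) :
    pderiv i ((X 0 : MvPolynomial (Fin 2) k) ^ 2 + C c ^ 2 * X 1 ^ 2) = 0 := by
  have h2 : (2 : MvPolynomial (Fin 2) k) = 0 := by
    exact_mod_cast CharP.cast_eq_zero (MvPolynomial (Fin 2) k) 2
  rw [g_eq_p_sq, Derivation.leibniz_pow]
  simp only [Nat.cast_ofNat, pow_one, smul_eq_mul, nsmul_eq_mul]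
  rw [h2, zero_mul]

lemma eval_p_zero : eval ![c, 1] (X 0 + C c * X 1 : MvPolynomial (Fin 2) k) = 0 := by
  simp
  rw [show c + c = 2 * c by ring, show (2 : k) = 0 from CharP.cast_eq_zero k 2, zero_mul]

lemma p_not_dvd_x (hc : c ≠ 0) : ¬ (X 0 + C c * X 1 : MvPolynomial (Fin 2) k) ∣ X 0 := by
  rintro ⟨t, ht⟩
  have h := congrArg (eval ![c, 1]) ht
  rw [map_mul, eval_p_zero, zero_mul] at h
  simp at h
  exact hc h

lemma p_not_dvd_y (hc : c ≠ 0) : ¬ (X 0 + C c * X 1 : MvPolynomial (Fin 2) k) ∣ X 1 := by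
  rintro ⟨t, ht⟩
  have h := congrArg (eval ![c, 1]) ht
  rw [map_mul, eval_p_zero, zero_mul] at h
  simp at h

lemma p_not_dvd_C (hc : c ≠ 0) : ¬ (X 0 + C c * X 1 : MvPolynomial (Fin 2) k) ∣ C c := by
  intro h
  exact (prime_p c).not_unit (isUnit_of_dvd_unit h (hc.isUnit.map C))

lemma pderiv_p_0 : pderiv 0 (X 0 + C c * X 1 : MvPolynomial (Fin 2) k) = 1 := by
  simp [pderiv_X_self, pderiv_X_of_ne (show (1 : Fin 2) ≠ 0 by decide), pderiv_C_mul]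

lemma pderiv_p_1 : pderiv 1 (X 0 + C c * X 1 : MvPolynomial (Fin 2) k) = C c := by
  simp [pderiv_X_self, pderiv_X_of_ne (show (0 : Fin 2) ≠ 1 by decide), pderiv_C_mul]

lemma bracket_x (t : MvPolynomial (Fin 2) k) :
    xyBracket (X 0) ((X 0 + C c * X 1) * t) =
    X 0 * X 1 * (C c * t) + (X 0 + C c * X 1) * (X 0 * X 1 * pderiv 1 t) := by
  unfold xyBracket
  rw [pderiv_mul, pderiv_mul, pderiv_p_0, pderiv_p_1,
    pderiv_X_self, pderiv_X_of_ne (show (0 : Fin 2) ≠ 1 by decide)]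
  ring

/-- A Poisson ideal contained in `⟨x + cy⟩` is contained in `⟨(x + cy)²⟩`. -/
lemma key (hc : c ≠ 0) (I : Ideal (MvPolynomial (Fin 2) k))
    (hI : IsXYPoissonIdeal I)
    (hle : I ≤ Ideal.span {X 0 + C c * X 1}) :
    I ≤ Ideal.span {(X 0 + C c * X 1 : MvPolynomial (Fin 2) k) ^ 2} := by
  intro f hf
  set p : MvPolynomial (Fin 2) k := X 0 + C c * X 1 with hp
  obtain ⟨t, ht⟩ := Ideal.mem_span_singleton.mp (hle hf)
  obtain ⟨u, hu⟩ := Ideal.mem_span_singleton.mp (hle (hI (X 0) f hf))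
  rw [ht, bracket_x] at hu
  have hdvd : p ∣ X 0 * X 1 * (C c * t) := by
    refine ⟨u - X 0 * X 1 * pderiv 1 t, ?_⟩
    linear_combination hu
  have hpt : p ∣ t := by
    have h := prime_p (k := k) c
    rcases h.dvd_mul.mp hdvd with h1 | h2
    · rcases h.dvd_mul.mp h1 with h3 | h4
      · exact absurd h3 (p_not_dvd_x c hc)
      · exact absurd h4 (p_not_dvd_y c hc)
    · rcases h.dvd_mul.mp h2 with h3 | h4
      · exact absurd h3 (p_not_dvd_C c hc)
      · exact h4
  obtain ⟨s, hs⟩ := hpt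
  exact Ideal.mem_span_singleton.mpr ⟨s, by rw [ht, hs]; ring⟩

end Aux

/-- Over an algebraically closed field of characteristic `2`, for every `c ≠ 0` the ideal
`⟨x² + c²y²⟩` of `k[x,y]` (with the bracket `{x,y} = xy`) is a Poisson ideal which is
Poisson-prime but not prime. -/
theorem xyBracket_poissonPrime_not_prime {k : Type*} [Field k] [IsAlgClosed k]
    [CharP k 2] (c : k) (hc : c ≠ 0) :
    IsXYPoissonIdeal (Ideal.span {(X 0 : MvPolynomial (Fin 2) k) ^ 2 + C c ^ 2 * X 1 ^ 2}) ∧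
    (Ideal.span {(X 0 : MvPolynomial (Fin 2) k) ^ 2 + C c ^ 2 * X 1 ^ 2} ≠ ⊤) ∧
    (∀ I J : Ideal (MvPolynomial (Fin 2) k), IsXYPoissonIdeal I → IsXYPoissonIdeal J →
      I * J ≤ Ideal.span {(X 0 : MvPolynomial (Fin 2) k) ^ 2 + C c ^ 2 * X 1 ^ 2} →
      I ≤ Ideal.span {(X 0 : MvPolynomial (Fin 2) k) ^ 2 + C c ^ 2 * X 1 ^ 2} ∨
      J ≤ Ideal.span {(X 0 : MvPolynomial (Fin 2) k) ^ 2 + C c ^ 2 * X 1 ^ 2}) ∧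
    ¬ (Ideal.span {(X 0 : MvPolynomial (Fin 2) k) ^ 2 + C c ^ 2 * X 1 ^ 2}).IsPrime := by
  set g : MvPolynomial (Fin 2) k := X 0 ^ 2 + C c ^ 2 * X 1 ^ 2 with hg
  set p : MvPolynomial (Fin 2) k := X 0 + C c * X 1 with hp
  have hgp : g = p ^ 2 := g_eq_p_sq c
  have hprime := prime_p (k := k) c
  refine ⟨?_, ?_, ?_, ?_⟩
  · -- Poisson ideal
    intro r a ha
    obtain ⟨t, ht⟩ := Ideal.mem_span_singleton.mp ha
    refine Ideal.mem_span_singleton.mpr ⟨xyBracket r t, ?_⟩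
    unfold xyBracket
    rw [ht, pderiv_mul, pderiv_mul, pderiv_g, pderiv_g]
    ring
  · -- not top
    intro h
    have hu := Ideal.span_singleton_eq_top.mp h
    rw [hgp] at hu
    exact hprime.not_unit (isUnit_of_dvd_unit (dvd_pow_self p two_ne_zero) hu)
  · -- Poisson prime
    intro I J hI hJ hIJ
    have hsub : Ideal.span {g} ≤ Ideal.span {p} := by
      rw [Ideal.span_singleton_le_span_singleton, hgp]
      exact dvd_pow_self p two_ne_zero
    have hPp : (Ideal.span {p}).IsPrime :=
      (Ideal.span_singleton_prime hprime.ne_zero).mpr hprime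
    rcases hPp.mul_le.mp (le_trans hIJ hsub) with h | h
    · left; rw [hgp]; exact key c hc I hI h
    · right; rw [hgp]; exact key c hc J hJ h
  · -- not prime
    intro hP
    have hg_mem : g ∈ Ideal.span {g} := Ideal.mem_span_singleton_self g
    have hpp : p * p ∈ Ideal.span {g} := by rwa [← sq, ← hgp]
    have hpmem : p ∈ Ideal.span {g} := by
      rcases hP.mem_or_mem hpp with h | h <;> exact h
    obtain ⟨t, ht⟩ := Ideal.mem_span_singleton.mp hpmem
    rw [hgp] at ht
    have h1 : p * 1 = p * (p * t) := by rw [mul_one, ← mul_assoc, ← sq, ← ht]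
    have := mul_left_cancel₀ hprime.ne_zero h1
    exact hprime.not_isUnit (IsUnit.of_mul_eq_one t this.symm)
end

section
/- Let 𝒜 be a torsionfree algebra over the Laurent polynomial ring k[t^{±1}] such that 𝒜/(t−1)𝒜 is commutative. Then every additive commutator [a,b] = ab − ba in 𝒜 is uniquely divisible by t−1, and the bracket {ā, b̄} := image of (t−1)^{-1}[a,b] is a well-defined Poisson bracket on the commutative algebra 𝒜/(t−1)𝒜. -/
open LaurentPolynomial

/-- Semiclassical limits: let `𝒜` be a torsionfree algebra over `k[t^{±1}]` whose quotient
`A₁ = 𝒜/(t-1)𝒜` (presented by a surjection `π` with kernel `(t-1)𝒜`) is commutative. Then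
every commutator `ab - ba` in `𝒜` is uniquely divisible by `t - 1`, and
`{π a, π b} := π((t-1)⁻¹ [a,b])` is a well-defined Poisson bracket on `A₁`. -/
theorem semiclassical_limit_poisson_bracket {k : Type*} [Field k] {A : Type*} [Ring A]
    [Algebra (LaurentPolynomial k) A]
    (htf : ∀ (p : LaurentPolynomial k) (a : A), p ≠ 0 → p • a = 0 → a = 0)
    {A₁ : Type*} [CommRing A₁] (π : A →+* A₁) (hsurj : Function.Surjective π)
    (hker : ∀ x : A, π x = 0 ↔
      ∃ c : A, x = algebraMap (LaurentPolynomial k) A (T 1 - 1) * c) :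
    (∀ a b : A, ∃! c : A,
        a * b - b * a = algebraMap (LaurentPolynomial k) A (T 1 - 1) * c) ∧
    ∃ B : A₁ → A₁ → A₁,
      (∀ a b c : A, a * b - b * a = algebraMap (LaurentPolynomial k) A (T 1 - 1) * c →
        B (π a) (π b) = π c) ∧
      (∀ x y z : A₁, B (x + y) z = B x z + B y z) ∧
      (∀ x y z : A₁, B x (y + z) = B x y + B x z) ∧
      (∀ x y : A₁, B x y = - B y x) ∧
      (∀ x y z : A₁, B x (B y z) + B y (B z x) + B z (B x y) = 0) ∧
      (∀ a x y : A₁, B a (x * y) = B a x * y + x * B a y) := by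
  set p : LaurentPolynomial k := T 1 - 1 with hp
  have hp0 : p ≠ 0 := by
    have h : p = Polynomial.toLaurent (Polynomial.X - 1) := by simp [hp]
    rw [h]
    refine (map_ne_zero_iff _ Polynomial.toLaurent_injective).mpr ?_
    simpa using Polynomial.X_sub_C_ne_zero (1 : k)
  set τ : A := algebraMap (LaurentPolynomial k) A p with hτ
  -- cancellation of τ
  have hcancel : ∀ x y : A, τ * x = τ * y → x = y := by
    intro x y h
    have h0 : p • (x - y) = 0 := by
      rw [Algebra.smul_def, ← hτ, mul_sub, h, sub_self]
    have := htf p (x - y) hp0 h0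
    exact sub_eq_zero.mp this
  -- centrality of τ
  have hc : ∀ u v : A, u * (τ * v) = τ * (u * v) := by
    intro u v
    rw [hτ, ← mul_assoc, ← Algebra.commutes, mul_assoc]
  -- existence of the divided commutator
  have hexist : ∀ a b : A, ∃ c : A, a * b - b * a = τ * c := by
    intro a b
    refine (hker _).mp ?_
    rw [map_sub, map_mul, map_mul, mul_comm, sub_self]
  choose D hD using hexist
  -- well-definedness modulo ker π
  have hwd : ∀ a a' b b' : A, π a = π a' → π b = π b' → π (D a b) = π (D a' b') := by
    intro a a' b b' ha hb
    obtain ⟨u, hu⟩ := (hker (a - a')).mp (by rw [map_sub, ha, sub_self])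
    obtain ⟨v, hv⟩ := (hker (b - b')).mp (by rw [map_sub, hb, sub_self])
    have e1 : τ * (D a b - D a' b') =
        (a - a') * b - b * (a - a') + a' * (b - b') - (b - b') * a' := by
      rw [mul_sub, ← hD a b, ← hD a' b']; noncomm_ring
    rw [hu, hv] at e1
    have e2 : (τ * u) * b - b * (τ * u) + a' * (τ * v) - (τ * v) * a'
        = τ * (τ * (D u b + D a' v)) := by
      rw [hc b u, hc a' v, mul_assoc τ v a', mul_add τ (D u b) (D a' v),
        ← hD u b, ← hD a' v]
      noncomm_ring
    have e3 : D a b - D a' b' = τ * (D u b + D a' v) :=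
      hcancel _ _ (e1.trans e2)
    have e4 : π (D a b - D a' b') = 0 := (hker _).mpr ⟨_, e3⟩
    rw [map_sub, sub_eq_zero] at e4
    exact e4
  -- the section and the bracket
  set s : A₁ → A := Function.surjInv hsurj with hs'
  have hs : ∀ x : A₁, π (s x) = x := fun x => Function.surjInv_eq hsurj x
  set B : A₁ → A₁ → A₁ := fun x y => π (D (s x) (s y)) with hB
  have hpi : ∀ a b c : A, a * b - b * a = τ * c → B (π a) (π b) = π c := by
    intro a b c h
    have hc' : c = D a b := hcancel _ _ (h.symm.trans (hD a b))
    rw [hc', hB]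
    exact hwd _ _ _ _ (hs _) (hs _)
  refine ⟨fun a b => ⟨D a b, hD a b, fun y hy => hcancel _ _ (hy.symm.trans (hD a b))⟩,
    B, hpi, ?_, ?_, ?_, ?_, ?_⟩
  · -- additivity on the left
    intro x y z
    obtain ⟨a, rfl⟩ := hsurj x
    obtain ⟨b, rfl⟩ := hsurj y
    obtain ⟨c, rfl⟩ := hsurj z
    have key : (a + b) * c - c * (a + b) = τ * (D a c + D b c) := by
      rw [mul_add τ (D a c) (D b c), ← hD a c, ← hD b c]; noncomm_ring
    rw [← map_add, hpi _ _ _ key, map_add, hpi a c _ (hD a c), hpi b c _ (hD b c)]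
  · -- additivity on the right
    intro x y z
    obtain ⟨a, rfl⟩ := hsurj x
    obtain ⟨b, rfl⟩ := hsurj y
    obtain ⟨c, rfl⟩ := hsurj z
    have key : a * (b + c) - (b + c) * a = τ * (D a b + D a c) := by
      rw [mul_add τ (D a b) (D a c), ← hD a b, ← hD a c]; noncomm_ring
    rw [← map_add, hpi _ _ _ key, map_add, hpi a b _ (hD a b), hpi a c _ (hD a c)]
  · -- antisymmetry
    intro x y
    obtain ⟨a, rfl⟩ := hsurj x
    obtain ⟨b, rfl⟩ := hsurj y
    have key : a * b - b * a = τ * (-(D b a)) := by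
      rw [mul_neg, ← hD b a]; noncomm_ring
    rw [hpi a b _ key, map_neg, hpi b a _ (hD b a)]
  · -- Jacobi identity
    intro x y z
    obtain ⟨a, rfl⟩ := hsurj x
    obtain ⟨b, rfl⟩ := hsurj y
    obtain ⟨c, rfl⟩ := hsurj z
    set d1 := D b c with hd1
    set d2 := D c a with hd2
    set d3 := D a b with hd3
    have e1 : τ * (τ * D a d1) = a * (b * c - c * b) - (b * c - c * b) * a := by
      rw [hD b c, ← hd1, hc a d1, mul_assoc τ d1 a, ← mul_sub, hD a d1]
    have e2 : τ * (τ * D b d2) = b * (c * a - a * c) - (c * a - a * c) * b := by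
      rw [hD c a, ← hd2, hc b d2, mul_assoc τ d2 b, ← mul_sub, hD b d2]
    have e3 : τ * (τ * D c d3) = c * (a * b - b * a) - (a * b - b * a) * c := by
      rw [hD a b, ← hd3, hc c d3, mul_assoc τ d3 c, ← mul_sub, hD c d3]
    have h2 : τ * (τ * (D a d1 + D b d2 + D c d3)) = 0 := by
      have expand : τ * (τ * (D a d1 + D b d2 + D c d3))
          = τ * (τ * D a d1) + τ * (τ * D b d2) + τ * (τ * D c d3) := by
        noncomm_ring
      rw [expand, e1, e2, e3]; noncomm_ring
    have h1 : τ * (D a d1 + D b d2 + D c d3) = 0 :=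
      hcancel _ _ (by rw [mul_zero]; exact h2)
    have h0 : D a d1 + D b d2 + D c d3 = 0 :=
      hcancel _ _ (by rw [mul_zero]; exact h1)
    have hb1 : B (π b) (π c) = π d1 := hpi b c d1 (hD b c)
    have hb2 : B (π c) (π a) = π d2 := hpi c a d2 (hD c a)
    have hb3 : B (π a) (π b) = π d3 := hpi a b d3 (hD a b)
    rw [hb1, hb2, hb3, hpi a d1 _ (hD a d1), hpi b d2 _ (hD b d2),
      hpi c d3 _ (hD c d3), ← map_add, ← map_add, h0, map_zero]
  · -- Leibniz rule
    intro x y z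
    obtain ⟨a, rfl⟩ := hsurj x
    obtain ⟨b, rfl⟩ := hsurj y
    obtain ⟨c, rfl⟩ := hsurj z
    have key : a * (b * c) - (b * c) * a = τ * (D a b * c + b * D a c) := by
      rw [mul_add τ (D a b * c) (b * D a c), ← mul_assoc τ (D a b) c,
        ← hc b (D a c), ← hD a b, ← hD a c]
      noncomm_ring
    rw [← map_mul, hpi a (b * c) _ key, map_add, map_mul, map_mul,
      hpi a b _ (hD a b), hpi a c _ (hD a c)]
end

section
/- If q ∈ k× is not a root of unity, the quantum plane A = O_q(k^2) is a primitive ring; equivalently, the zero ideal of A is a (left) primitive ideal. -/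
/-- The defining relation of the quantum plane: `x * y = q • (y * x)`. -/
inductive QPlaneRel (k : Type*) [CommRing k] (q : k) :
    FreeAlgebra k (Fin 2) → FreeAlgebra k (Fin 2) → Prop
  | rel : QPlaneRel k q (FreeAlgebra.ι k (0 : Fin 2) * FreeAlgebra.ι k (1 : Fin 2))
      (algebraMap k _ q * (FreeAlgebra.ι k (1 : Fin 2) * FreeAlgebra.ι k (0 : Fin 2)))

/-- The quantum plane `O_q(k²) = k⟨x,y⟩/(xy - qyx)`. -/
abbrev QuantumPlane (k : Type*) [CommRing k] (q : k) := RingQuot (QPlaneRel k q)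

/-- The generator `x` of the quantum plane. -/
noncomputable def qpX (k : Type*) [CommRing k] (q : k) : QuantumPlane k q :=
  RingQuot.mkAlgHom k (QPlaneRel k q) (FreeAlgebra.ι k (0 : Fin 2))

/-- The generator `y` of the quantum plane. -/
noncomputable def qpY (k : Type*) [CommRing k] (q : k) : QuantumPlane k q :=
  RingQuot.mkAlgHom k (QPlaneRel k q) (FreeAlgebra.ι k (1 : Fin 2))


universe u
noncomputable section
namespace QPaux
open Finsupp
variable {k : Type u} [Field k] (q : k)

def opX : (ℤ →₀ k) →ₗ[k] (ℤ →₀ k) :=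
  Finsupp.lsum k fun n => q ^ n • Finsupp.lsingle (n - 1)

def opY : (ℤ →₀ k) →ₗ[k] (ℤ →₀ k) := Finsupp.lmapDomain k k (· + 1)

lemma opX_single (n : ℤ) (c : k) :
    opX q (Finsupp.single n c) = q ^ n • Finsupp.single (n - 1) c := by
  rw [opX, Finsupp.lsum_single, LinearMap.smul_apply, Finsupp.lsingle_apply]

lemma opY_single (n : ℤ) (c : k) :
    opY (Finsupp.single n c) = Finsupp.single (n + 1) c := by
  rw [opY, Finsupp.lmapDomain_apply, Finsupp.mapDomain_single]

lemma end_rel (hq0 : q ≠ 0) :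
    (opX q : Module.End k (ℤ →₀ k)) * opY = q • ((opY : Module.End k (ℤ →₀ k)) * opX q) := by
  apply Finsupp.lhom_ext
  intro n c
  rw [Module.End.mul_apply, LinearMap.smul_apply, Module.End.mul_apply, opY_single, opX_single,
    opX_single, map_smul, opY_single, smul_smul, zpow_add_one₀ hq0, mul_comm,
    add_sub_cancel_right, sub_add_cancel]

def rho (hq0 : q ≠ 0) : QuantumPlane k q →ₐ[k] Module.End k (ℤ →₀ k) :=
  RingQuot.liftAlgHom k ⟨FreeAlgebra.lift k ![opX q, opY], by
    rintro x y ⟨⟩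
    simp only [map_mul, FreeAlgebra.lift_ι_apply, Matrix.cons_val_zero, Matrix.cons_val_one,
      Matrix.head_cons, AlgHom.commutes]
    rw [end_rel q hq0, Algebra.smul_def]⟩

lemma rho_x (hq0 : q ≠ 0) : rho q hq0 (qpX k q) = opX q := by
  rw [rho, qpX, RingQuot.liftAlgHom_mkAlgHom_apply]
  simp [FreeAlgebra.lift_ι_apply]

lemma rho_y (hq0 : q ≠ 0) : rho q hq0 (qpY k q) = opY := by
  rw [rho, qpY, RingQuot.liftAlgHom_mkAlgHom_apply]
  simp [FreeAlgebra.lift_ι_apply]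

end QPaux
namespace QPaux
open Finsupp
variable {k : Type u} [Field k] (q : k)

/-- coefficient of `x^j` acting on `single t 1`. -/
def pi (j : ℕ) (t : ℤ) : k := ∏ m ∈ Finset.range j, q ^ (t - (m : ℤ))

lemma pi_ne_zero (hq0 : q ≠ 0) (j : ℕ) (t : ℤ) : pi q j t ≠ 0 :=
  Finset.prod_ne_zero_iff.2 fun _ _ => zpow_ne_zero _ hq0

lemma pi_succ (j : ℕ) (t : ℤ) : pi q (j + 1) t = pi q j (t - 1) * q ^ t := by
  rw [pi, Finset.prod_range_succ']
  simp only [Nat.cast_add, Nat.cast_one, Nat.cast_zero, sub_zero, pi]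
  congr 1
  apply Finset.prod_congr rfl
  intro m _
  congr 1
  ring

lemma pi_step (hq0 : q ≠ 0) (j : ℕ) (t : ℤ) : pi q j (t + 1) = pi q j t * q ^ j := by
  rw [pi, pi]
  have : ∀ m ∈ Finset.range j, q ^ (t + 1 - (m:ℤ)) = q ^ (t - (m:ℤ)) * q := by
    intro m _
    rw [← zpow_add_one₀ hq0]
    congr 1; ring
  rw [Finset.prod_congr rfl this, Finset.prod_mul_distrib, Finset.prod_const, Finset.card_range]

lemma pi_nat (hq0 : q ≠ 0) (j n : ℕ) : pi q j (n : ℤ) = pi q j 0 * (q ^ j) ^ n := by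
  induction n with
  | zero => simp
  | succ n ih => push_cast; rw [pi_step q hq0, ih, pow_succ]; ring

lemma opX_pow_single (j : ℕ) (t : ℤ) (c : k) :
    ((opX q) ^ j) (Finsupp.single t c) = pi q j t • Finsupp.single (t - j) c := by
  induction j generalizing t with
  | zero => simp [pi]
  | succ j ih =>
    rw [pow_succ, Module.End.mul_apply, opX_single, map_smul, ih, pi_succ, smul_smul, mul_comm]
    congr 2
    push_cast; ring

lemma opY_pow_single (i : ℕ) (t : ℤ) (c : k) :
    ((opY : Module.End k (ℤ →₀ k)) ^ i) (Finsupp.single t c) = Finsupp.single (t + i) c := by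
  induction i generalizing t with
  | zero => simp
  | succ i ih =>
    rw [pow_succ', Module.End.mul_apply, ih, opY_single]
    congr 1; push_cast; ring

/-- the diagonal operator `yx`. -/
lemma opD_apply (m : ℤ →₀ k) (t : ℤ) : (opY ((opX q) m)) t = q ^ t * m t := by
  induction m using Finsupp.induction_linear with
  | zero => simp
  | add f g hf hg => simp only [map_add, Finsupp.add_apply, hf, hg]; ring
  | single n c =>
    rw [opX_single, map_smul, opY_single, sub_add_cancel, Finsupp.smul_apply,
      Finsupp.single_apply]
    by_cases h : n = t <;> simp [h, smul_eq_mul]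

end QPaux
namespace QPaux
variable {k : Type u} [Field k] {q : k}

lemma npow_inj (hq0 : q ≠ 0) (hq : ∀ n : ℕ, 0 < n → q ^ n ≠ 1) {a b : ℕ}
    (h : q ^ a = q ^ b) : a = b := by
  wlog hab : a ≤ b generalizing a b
  · exact (this h.symm (le_of_not_ge hab)).symm
  have h2 : q ^ a * q ^ (b - a) = q ^ a * 1 := by
    rw [← pow_add, mul_one, Nat.add_sub_cancel' hab, h]
  have h3 := mul_left_cancel₀ (pow_ne_zero a hq0) h2
  by_contra hne
  exact hq (b - a) (by omega) h3

lemma zpow_inj (hq0 : q ≠ 0) (hq : ∀ n : ℕ, 0 < n → q ^ n ≠ 1) {a b : ℤ}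
    (h : q ^ a = q ^ b) : a = b := by
  wlog hab : a ≤ b generalizing a b
  · exact (this h.symm (le_of_not_ge hab)).symm
  have h2 : q ^ (b - a) = 1 := by
    rw [zpow_sub₀ hq0, h, div_self (zpow_ne_zero _ hq0)]
  by_contra hne
  have hpos : 0 < b - a := by omega
  obtain ⟨n, hn⟩ : ∃ n : ℕ, (n : ℤ) = b - a := ⟨(b-a).toNat, by omega⟩
  rw [← hn, zpow_natCast] at h2
  exact hq n (by omega) h2

/-- Vandermonde-type independence. -/
lemma vand {ι : Type*} [DecidableEq ι] (S : Finset ι) (r : ι → k) :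
    ∀ (b : ι → k), (∀ p ∈ S, ∀ p' ∈ S, r p = r p' → p = p') →
    (∀ n : ℕ, ∑ p ∈ S, b p * r p ^ n = 0) → ∀ p ∈ S, b p = 0 := by
  induction S using Finset.strongInduction with
  | _ S ih =>
    intro b hr h
    rcases S.eq_empty_or_nonempty with rfl | ⟨p₀, hp₀⟩
    · simp
    have herase : ∀ p ∈ S.erase p₀, b p * (r p - r p₀) = 0 := by
      refine ih (S.erase p₀) (Finset.erase_ssubset hp₀) (fun p => b p * (r p - r p₀))
        (fun p hp p' hp' hrr => hr p (Finset.mem_of_mem_erase hp) p' (Finset.mem_of_mem_erase hp') hrr)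
        (fun n => ?_)
      have e1 := h (n + 1)
      have e2 := h n
      have : ∑ p ∈ S, b p * (r p - r p₀) * r p ^ n = 0 := by
        have : ∑ p ∈ S, b p * (r p - r p₀) * r p ^ n
            = (∑ p ∈ S, b p * r p ^ (n+1)) - r p₀ * ∑ p ∈ S, b p * r p ^ n := by
          rw [Finset.mul_sum, ← Finset.sum_sub_distrib]
          apply Finset.sum_congr rfl
          intro p _
          ring
        rw [this, e1, e2, mul_zero, sub_zero]
      rwa [← Finset.add_sum_erase _ _ hp₀, sub_self, mul_zero, zero_mul, zero_add] at this
    have hbz : ∀ p ∈ S.erase p₀, b p = 0 := by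
      intro p hp
      have hne : r p - r p₀ ≠ 0 := by
        intro hc
        exact (Finset.ne_of_mem_erase hp) (hr p (Finset.mem_of_mem_erase hp) p₀ hp₀ (sub_eq_zero.1 hc))
      exact (mul_eq_zero.1 (herase p hp)).resolve_right hne
    have h0 := h 0
    rw [← Finset.add_sum_erase _ _ hp₀, Finset.sum_congr rfl (fun p hp => by rw [hbz p hp, zero_mul]),
      Finset.sum_const_zero, add_zero, pow_zero, mul_one] at h0
    intro p hp
    rcases eq_or_ne p p₀ with rfl | hne
    · exact h0
    · exact hbz p (Finset.mem_erase.2 ⟨hne, hp⟩)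

end QPaux
namespace QPaux
variable {k : Type u} [Field k] (q : k)

lemma cmul (r : k) (z w : QuantumPlane k q) :
    z * (algebraMap k _ r * w) = algebraMap k _ r * (z * w) := by
  rw [← mul_assoc, ← Algebra.commutes, mul_assoc]

lemma comm_xy : qpX k q * qpY k q = algebraMap k _ q * (qpY k q * qpX k q) := by
  rw [qpX, qpY, ← map_mul, ← map_mul, RingQuot.mkAlgHom_rel k QPlaneRel.rel, map_mul, map_mul,
    AlgHom.commutes]

lemma comm_x_ypow (m : ℕ) :
    qpX k q * (qpY k q) ^ m = algebraMap k _ (q ^ m) * ((qpY k q) ^ m * qpX k q) := by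
  induction m with
  | zero => simp
  | succ m ih =>
    calc qpX k q * (qpY k q) ^ (m + 1)
        = (qpX k q * qpY k q) * (qpY k q) ^ m := by rw [pow_succ', ← mul_assoc]
      _ = (algebraMap k _ q * (qpY k q * qpX k q)) * (qpY k q) ^ m := by rw [comm_xy]
      _ = algebraMap k _ q * (qpY k q * (qpX k q * (qpY k q) ^ m)) := by noncomm_ring
      _ = algebraMap k _ q * (qpY k q * (algebraMap k _ (q ^ m) * ((qpY k q) ^ m * qpX k q))) := by
          rw [ih]
      _ = algebraMap k _ q * (algebraMap k _ (q ^ m) * (qpY k q * ((qpY k q) ^ m * qpX k q))) := by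
          rw [cmul]
      _ = (algebraMap k _ q * algebraMap k _ (q ^ m)) * ((qpY k q * (qpY k q) ^ m) * qpX k q) := by
          noncomm_ring
      _ = algebraMap k _ (q ^ (m + 1)) * ((qpY k q) ^ (m + 1) * qpX k q) := by
          rw [← map_mul, ← pow_succ', ← pow_succ']

lemma comm_xpow_ypow (j a : ℕ) :
    (qpX k q) ^ j * (qpY k q) ^ a
      = algebraMap k _ (q ^ (j * a)) * ((qpY k q) ^ a * (qpX k q) ^ j) := by
  induction j with
  | zero => simp
  | succ j ih =>
    calc (qpX k q) ^ (j + 1) * (qpY k q) ^ a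
        = qpX k q * ((qpX k q) ^ j * (qpY k q) ^ a) := by rw [pow_succ', mul_assoc]
      _ = qpX k q * (algebraMap k _ (q ^ (j * a)) * ((qpY k q) ^ a * (qpX k q) ^ j)) := by rw [ih]
      _ = algebraMap k _ (q ^ (j * a)) * ((qpX k q * (qpY k q) ^ a) * (qpX k q) ^ j) := by
          rw [cmul]; noncomm_ring
      _ = algebraMap k _ (q ^ (j * a)) *
            ((algebraMap k _ (q ^ a) * ((qpY k q) ^ a * qpX k q)) * (qpX k q) ^ j) := by
          rw [comm_x_ypow]
      _ = (algebraMap k _ (q ^ (j * a)) * algebraMap k _ (q ^ a)) *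
            ((qpY k q) ^ a * (qpX k q * (qpX k q) ^ j)) := by
          noncomm_ring
      _ = algebraMap k _ (q ^ ((j + 1) * a)) * ((qpY k q) ^ a * (qpX k q) ^ (j + 1)) := by
          rw [← map_mul, ← pow_add, ← pow_succ']
          congr 2
          ring

/-- the monomials `y^i x^j`. -/
def mono (p : ℕ × ℕ) : QuantumPlane k q := (qpY k q) ^ p.1 * (qpX k q) ^ p.2

lemma mono_mul (p p' : ℕ × ℕ) :
    mono q p * mono q p' = q ^ (p.2 * p'.1) • mono q (p.1 + p'.1, p.2 + p'.2) := by
  rw [mono, mono, mono, Algebra.smul_def]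
  calc (qpY k q) ^ p.1 * (qpX k q) ^ p.2 * ((qpY k q) ^ p'.1 * (qpX k q) ^ p'.2)
      = (qpY k q) ^ p.1 * (((qpX k q) ^ p.2 * (qpY k q) ^ p'.1) * (qpX k q) ^ p'.2) := by
        noncomm_ring
    _ = (qpY k q) ^ p.1 *
          ((algebraMap k _ (q ^ (p.2 * p'.1)) * ((qpY k q) ^ p'.1 * (qpX k q) ^ p.2)) * (qpX k q) ^ p'.2) := by
        rw [comm_xpow_ypow]
    _ = algebraMap k _ (q ^ (p.2 * p'.1)) *
          (((qpY k q) ^ p.1 * (qpY k q) ^ p'.1) * ((qpX k q) ^ p.2 * (qpX k q) ^ p'.2)) := by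
        rw [show (algebraMap k (QuantumPlane k q) (q ^ (p.2 * p'.1)) * ((qpY k q) ^ p'.1 * (qpX k q) ^ p.2)) * (qpX k q) ^ p'.2
            = algebraMap k _ (q ^ (p.2 * p'.1)) * ((qpY k q) ^ p'.1 * ((qpX k q) ^ p.2 * (qpX k q) ^ p'.2)) from by noncomm_ring,
          cmul, ← mul_assoc ((qpY k q) ^ p.1), ← mul_assoc]
    _ = algebraMap k _ (q ^ (p.2 * p'.1)) * ((qpY k q) ^ (p.1 + p'.1) * (qpX k q) ^ (p.2 + p'.2)) := by
        rw [← pow_add, ← pow_add]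

lemma mono_mem_mul (u v : QuantumPlane k q)
    (hu : u ∈ Submodule.span k (Set.range (mono q)))
    (hv : v ∈ Submodule.span k (Set.range (mono q))) :
    u * v ∈ Submodule.span k (Set.range (mono q)) := by
  induction hu using Submodule.span_induction with
  | zero => rw [zero_mul]; exact Submodule.zero_mem _
  | add a b _ _ ha hb => rw [add_mul]; exact Submodule.add_mem _ ha hb
  | smul r a _ ha => rw [smul_mul_assoc]; exact Submodule.smul_mem _ _ ha
  | mem a ha =>
    obtain ⟨p, rfl⟩ := ha
    induction hv using Submodule.span_induction with
    | zero => rw [mul_zero]; exact Submodule.zero_mem _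
    | add a b _ _ ha hb => rw [mul_add]; exact Submodule.add_mem _ ha hb
    | smul r a _ ha => rw [mul_smul_comm]; exact Submodule.smul_mem _ _ ha
    | mem b hb =>
      obtain ⟨p', rfl⟩ := hb
      rw [mono_mul]
      exact Submodule.smul_mem _ _ (Submodule.subset_span ⟨_, rfl⟩)

lemma span_mono_top (a : QuantumPlane k q) : a ∈ Submodule.span k (Set.range (mono q)) := by
  obtain ⟨b, rfl⟩ := RingQuot.mkAlgHom_surjective k (QPlaneRel k q) a
  induction b using FreeAlgebra.induction with
  | grade0 r =>
    rw [AlgHom.commutes, Algebra.algebraMap_eq_smul_one]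
    refine Submodule.smul_mem _ _ (Submodule.subset_span ⟨(0, 0), ?_⟩)
    simp [mono]
  | grade1 x =>
    fin_cases x
    · exact Submodule.subset_span ⟨(0, 1), by simp [mono, qpX]⟩
    · exact Submodule.subset_span ⟨(1, 0), by simp [mono, qpY]⟩
  | mul a b ha hb => rw [map_mul]; exact mono_mem_mul q _ _ ha hb
  | add a b ha hb => rw [map_add]; exact Submodule.add_mem _ ha hb

end QPaux

/-- If `q` is not a root of unity (over an algebraically closed field), the quantum plane
is a left primitive ring: it has a faithful simple left module, i.e. the zero ideal is the
annihilator of a simple left module. -/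
theorem quantumPlane_primitive {k : Type u} [Field k] [IsAlgClosed k] (q : k)
    (hq0 : q ≠ 0) (hq : ∀ n : ℕ, 0 < n → q ^ n ≠ 1) :
    ∃ (M : Type u) (_ : AddCommGroup M) (_ : Module (QuantumPlane k q) M),
      IsSimpleModule (QuantumPlane k q) M ∧
      ∀ a : QuantumPlane k q, (∀ m : M, a • m = 0) → a = 0 := by
  classical
  letI inst : Module (QuantumPlane k q) (ℤ →₀ k) :=
    Module.compHom _ (QPaux.rho q hq0).toRingHom
  have hsmul : ∀ (a : QuantumPlane k q) (m : ℤ →₀ k), a • m = QPaux.rho q hq0 a m :=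
    fun _ _ => rfl
  have halg : ∀ (c : k) (m : ℤ →₀ k), (algebraMap k (QuantumPlane k q) c) • m = c • m := by
    intro c m
    rw [hsmul, AlgHom.commutes]
    exact Module.algebraMap_end_apply k k _ c m
  have hx : ∀ m : ℤ →₀ k, qpX k q • m = QPaux.opX q m := by
    intro m; rw [hsmul, QPaux.rho_x]
  have hy : ∀ m : ℤ →₀ k, qpY k q • m = QPaux.opY m := by
    intro m; rw [hsmul, QPaux.rho_y]
  have hD : ∀ (m : ℤ →₀ k) (t : ℤ), ((qpY k q * qpX k q) • m) t = q ^ t * m t := by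
    intro m t
    rw [hsmul, map_mul, QPaux.rho_x, QPaux.rho_y, Module.End.mul_apply]
    exact QPaux.opD_apply q m t
  -- Step 1: a submodule containing some `single n 1` is everything.
  have claim_step : ∀ (N : Submodule (QuantumPlane k q) (ℤ →₀ k)),
      (∃ n : ℤ, Finsupp.single n (1:k) ∈ N) → N = ⊤ := by
    rintro N ⟨n, hn⟩
    have up : ∀ t : ℤ, Finsupp.single t (1:k) ∈ N → Finsupp.single (t+1) (1:k) ∈ N := by
      intro t h
      have := N.smul_mem (qpY k q) h
      rwa [hy, QPaux.opY_single] at this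
    have down : ∀ t : ℤ, Finsupp.single t (1:k) ∈ N → Finsupp.single (t-1) (1:k) ∈ N := by
      intro t h
      have h1 := N.smul_mem (qpX k q) h
      rw [hx, QPaux.opX_single] at h1
      have h2 := N.smul_mem (algebraMap k (QuantumPlane k q) (q ^ t)⁻¹) h1
      rwa [halg, smul_smul, inv_mul_cancel₀ (zpow_ne_zero _ hq0), one_smul] at h2
    have all : ∀ j : ℕ, Finsupp.single (n + j) (1:k) ∈ N ∧ Finsupp.single (n - j) (1:k) ∈ N := by
      intro j
      induction j with
      | zero => constructor <;> simpa using hn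
      | succ j ih =>
        constructor
        · have h := up _ ih.1
          rwa [show (n + (j:ℤ)) + 1 = n + ((j:ℕ)+1 : ℕ) by push_cast; ring] at h
        · have h := down _ ih.2
          rwa [show (n - (j:ℤ)) - 1 = n - ((j:ℕ)+1 : ℕ) by push_cast; ring] at h
    have hall : ∀ t : ℤ, Finsupp.single t (1:k) ∈ N := by
      intro t
      rcases le_total n t with h | h
      · have := (all (t - n).toNat).1
        rwa [show n + (((t - n).toNat : ℕ) : ℤ) = t by omega] at this
      · have := (all (n - t).toNat).2
        rwa [show n - (((n - t).toNat : ℕ) : ℤ) = t by omega] at this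
    rw [eq_top_iff]
    intro m hmem
    clear hmem
    induction m using Finsupp.induction with
    | zero => exact N.zero_mem
    | single_add a b f _ _ ihf =>
      refine N.add_mem ?_ ihf
      have := N.smul_mem (algebraMap k (QuantumPlane k q) b) (hall a)
      rwa [halg, Finsupp.smul_single, smul_eq_mul, mul_one] at this
  -- Step 2: a nonzero submodule contains some `single n 1`.
  have claim_reduce : ∀ (N : Submodule (QuantumPlane k q) (ℤ →₀ k)) (s : ℕ) (m : ℤ →₀ k),
      m.support.card = s → m ∈ N → m ≠ 0 → ∃ n : ℤ, Finsupp.single n (1:k) ∈ N := by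
    intro N s
    induction s using Nat.strong_induction_on with
    | _ s ih =>
      intro m hcard hmN hm0
      have hne : m.support.Nonempty := Finsupp.support_nonempty_iff.2 hm0
      by_cases hcard1 : m.support.card = 1
      · obtain ⟨n, hn1, hn2⟩ := Finsupp.card_support_eq_one.1 hcard1
        refine ⟨n, ?_⟩
        have h2 := N.smul_mem (algebraMap k (QuantumPlane k q) (m n)⁻¹) hmN
        rw [halg] at h2
        rw [show (m n)⁻¹ • m = Finsupp.single n (1:k) by
          nth_rewrite 2 [hn2]
          rw [Finsupp.smul_single, smul_eq_mul, inv_mul_cancel₀ hn1]] at h2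
        exact h2
      · obtain ⟨n₀, hn₀⟩ := hne
        have hcard2 : 1 < m.support.card := by
          have := Finset.card_pos.2 ⟨n₀, hn₀⟩
          omega
        obtain ⟨n₁, hn₁S, hn₁ne⟩ := Finset.exists_mem_ne hcard2 n₀
        set a : QuantumPlane k q :=
          qpY k q * qpX k q - algebraMap k (QuantumPlane k q) (q ^ n₁) with ha
        set m' := a • m with hm'def
        have hm' : ∀ t : ℤ, m' t = (q ^ t - q ^ n₁) * m t := by
          intro t
          rw [hm'def, ha, sub_smul, Finsupp.sub_apply, hD, halg, Finsupp.smul_apply, smul_eq_mul]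
          ring
        have hm'N : m' ∈ N := N.smul_mem a hmN
        have hsub : m'.support ⊆ m.support.erase n₁ := by
          intro t ht
          rw [Finsupp.mem_support_iff] at ht
          rw [Finset.mem_erase, Finsupp.mem_support_iff]
          constructor
          · rintro rfl
            exact ht (by rw [hm', sub_self, zero_mul])
          · intro h
            exact ht (by rw [hm', h, mul_zero])
        have hn₀' : n₀ ∈ m'.support := by
          rw [Finsupp.mem_support_iff, hm']
          apply mul_ne_zero
          · intro h
            exact hn₁ne (QPaux.zpow_inj hq0 hq (sub_eq_zero.1 h)).symm
          · exact Finsupp.mem_support_iff.1 hn₀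
        have hm'0 : m' ≠ 0 := by
          intro h
          rw [h] at hn₀'
          simp at hn₀'
        have hlt : m'.support.card < s := by
          calc m'.support.card ≤ (m.support.erase n₁).card := Finset.card_le_card hsub
            _ < m.support.card := by
                rw [Finset.card_erase_of_mem hn₁S]
                omega
            _ = s := hcard
        exact ih _ hlt m' rfl hm'N hm'0
  -- simplicity
  haveI : Nontrivial (ℤ →₀ k) := inferInstance
  have hsimple : IsSimpleModule (QuantumPlane k q) (ℤ →₀ k) := by
    rw [isSimpleModule_iff]
    constructor
    intro N
    by_cases hN : N = ⊥
    · exact Or.inl hN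
    · refine Or.inr ?_
      obtain ⟨m, hmN, hm0⟩ := Submodule.exists_mem_ne_zero_of_ne_bot hN
      exact claim_step N (claim_reduce N m.support.card m rfl hmN hm0)
  -- faithfulness
  refine ⟨ℤ →₀ k, inferInstance, inst, hsimple, ?_⟩
  intro a ha
  have hrho : QPaux.rho q hq0 a = 0 := LinearMap.ext fun m => by rw [← hsmul]; exact ha m
  obtain ⟨c, hc⟩ := Finsupp.mem_span_range_iff_exists_finsupp.1 (QPaux.span_mono_top q a)
  have hmonoOp : ∀ (p : ℕ × ℕ) (t : ℤ),
      (QPaux.rho q hq0 (QPaux.mono q p)) (Finsupp.single t (1:k))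
        = QPaux.pi q p.2 t • Finsupp.single (t - p.2 + p.1) (1:k) := by
    intro p t
    rw [QPaux.mono, map_mul, map_pow, map_pow, QPaux.rho_x, QPaux.rho_y, Module.End.mul_apply,
      QPaux.opX_pow_single, map_smul, QPaux.opY_pow_single]
  suffices hc0 : ∀ p ∈ c.support, c p = 0 by
    rw [← hc, Finsupp.sum]
    exact Finset.sum_eq_zero fun p hp => by rw [hc0 p hp, zero_smul]
  intro p₀ hp₀
  by_contra hcp
  set d : ℤ := (p₀.1 : ℤ) - p₀.2 with hd
  set S : Finset (ℕ × ℕ) := c.support.filter (fun p : ℕ × ℕ => (p.1 : ℤ) - p.2 = d) with hS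
  have key : ∀ t : ℤ, ∑ p ∈ S, c p * QPaux.pi q p.2 t = 0 := by
    intro t
    have h1 : (QPaux.rho q hq0 a) (Finsupp.single t (1:k)) (t + d) = 0 := by
      rw [hrho]; simp
    rw [← hc, Finsupp.sum, map_sum] at h1
    simp only [map_smul, LinearMap.sum_apply, LinearMap.smul_apply, hmonoOp,
      Finsupp.finset_sum_apply, Finsupp.smul_apply, Finsupp.single_apply, smul_eq_mul] at h1
    rw [Finset.sum_congr rfl (fun p (hp : p ∈ c.support) => show
        c p * (QPaux.pi q p.2 t * if t - (p.2:ℤ) + p.1 = t + d then (1:k) else 0)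
          = if (p.1:ℤ) - p.2 = d then c p * QPaux.pi q p.2 t else 0 from by
      by_cases hcond : (p.1 : ℤ) - p.2 = d
      · rw [if_pos hcond, if_pos (by omega), mul_one]
      · rw [if_neg hcond, if_neg (by omega), mul_zero, mul_zero]), ← Finset.sum_filter] at h1
    exact h1
  have keyn : ∀ n : ℕ, ∑ p ∈ S, (c p * QPaux.pi q p.2 0) * (q ^ p.2) ^ n = 0 := by
    intro n
    have h := key (n : ℤ)
    rw [Finset.sum_congr rfl (fun p _ => by
      rw [QPaux.pi_nat q hq0, ← mul_assoc] :
        ∀ p ∈ S, c p * QPaux.pi q p.2 (n:ℤ) = (c p * QPaux.pi q p.2 0) * (q ^ p.2) ^ n)] at h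
    exact h
  have hinj : ∀ p ∈ S, ∀ p' ∈ S, q ^ p.2 = q ^ p'.2 → p = p' := by
    intro p hp p' hp' hpow
    have h2 : p.2 = p'.2 := QPaux.npow_inj hq0 hq hpow
    have hp1 := (Finset.mem_filter.1 hp).2
    have hp'1 := (Finset.mem_filter.1 hp').2
    have h1 : p.1 = p'.1 := by omega
    exact Prod.ext h1 h2
  have hz := QPaux.vand S (fun p : ℕ × ℕ => q ^ p.2) (fun p => c p * QPaux.pi q p.2 0) hinj keyn
  have hp₀S : p₀ ∈ S := Finset.mem_filter.2 ⟨hp₀, rfl⟩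
  have := hz p₀ hp₀S
  exact hcp ((mul_eq_zero.1 this).resolve_right (QPaux.pi_ne_zero q hq0 _ _))

end
end
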